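/- arXiv:1807.10527 — 2 statements merged into one kernel-verified Lean document; each statement's English description precedes it below -/
import Mathlib

section
/- Let t ↦ Z_t be a bounded measurable family of 2d×m real matrices on [0,1] with Γ₁ = ∫₀¹ X_t X_tᵀ dt invertible. Let (s,t) ↦ ηˢ(t) ∈ ℝ^{2d} be a C¹ family such that for each s the curve t ↦ ηˢ(t) solves η̇ = s·Z_t Z_tᵀ J η and the q-component of ηˢ(0) is zero for every s. If at some parameter value s one has ⟨J ηˢ(1), ∂ηˢ/∂s (1)⟩ = 0, then ηˢ(1) = 0. -/
open MeasureTheory Filter Topology Matrix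

noncomputable section

/-- The standard symplectic `2d × 2d` matrix `J = [[0, -I],[I, 0]]`, over `ℝ`. -/
def Jmat (d : ℕ) : Matrix (Fin (d + d)) (Fin (d + d)) ℝ :=
  Matrix.reindex finSumFinEquiv finSumFinEquiv (Matrix.fromBlocks 0 (-1) 1 0)

/-- The bottom `d × m` block `X_t` of the block matrix `Z_t = (Y_t; X_t)`. -/
def Xblock {d m : ℕ} (Z : ℝ → Matrix (Fin (d + d)) (Fin m) ℝ) (t : ℝ) :
    Matrix (Fin d) (Fin m) ℝ :=
  Matrix.of fun i j => Z t (finSumFinEquiv (Sum.inr i)) j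

/-- Entrywise integral of a matrix-valued function over a subset of `ℝ`. -/
def mSetIntegral {n p : Type*} (s : Set ℝ) (f : ℝ → Matrix n p ℝ) : Matrix n p ℝ :=
  Matrix.of fun i j => ∫ t in s, f t i j

/-- Carathéodory solution of `η̇ = s · Z_t Z_tᵀ J η` on `[0,1]`,
via the equivalent integral equation. -/
def IsScaledJacobiSolution {d m : ℕ} (Z : ℝ → Matrix (Fin (d + d)) (Fin m) ℝ)
    (s : ℝ) (η : ℝ → Fin (d + d) → ℝ) : Prop :=
  ∀ t ∈ Set.Icc (0:ℝ) 1,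
    η t = η 0 + ∫ τ in (0:ℝ)..t, s • (Z τ * (Z τ)ᵀ * Jmat d).mulVec (η τ)

open Set

section JFAux

/-! ### Auxiliary lemmas -/

lemma JF_mulVec_apply {a b : ℕ} (M : Matrix (Fin a) (Fin b) ℝ) (v : Fin b → ℝ) (i : Fin a) :
    M.mulVec v i = ∑ j, M i j * v j := rfl

lemma JF_mulVec_dot {a b : ℕ} (M : Matrix (Fin a) (Fin b) ℝ) (x : Fin b → ℝ) (y : Fin a → ℝ) :
    M.mulVec x ⬝ᵥ y = x ⬝ᵥ Mᵀ.mulVec y := by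
  rw [Matrix.dotProduct_mulVec, Matrix.vecMul_transpose, dotProduct_comm]

lemma JF_Jmat_transpose (d : ℕ) : (Jmat d)ᵀ = -(Jmat d) := by
  ext a b
  simp only [Jmat, Matrix.reindex_apply, Matrix.transpose_apply, Matrix.submatrix_apply,
    Matrix.neg_apply]
  rcases h1 : finSumFinEquiv.symm a with i | i <;> rcases h2 : finSumFinEquiv.symm b with j | j <;>
    simp [Matrix.fromBlocks, Matrix.one_apply, eq_comm]

lemma JF_Jmat_mulVec_inl (d : ℕ) (u : Fin (d+d) → ℝ) (i : Fin d) :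
    ((Jmat d).mulVec u) (finSumFinEquiv (Sum.inl i)) = - u (finSumFinEquiv (Sum.inr i)) := by
  rw [Matrix.mulVec, dotProduct, ← Equiv.sum_comp finSumFinEquiv]
  simp only [Jmat, Matrix.reindex_apply, Matrix.submatrix_apply, Equiv.symm_apply_apply,
    Fintype.sum_sum_type]
  simp [Matrix.one_apply, ite_mul, Finset.sum_ite_eq]

lemma JF_Jmat_mulVec_inr (d : ℕ) (u : Fin (d+d) → ℝ) (i : Fin d) :
    ((Jmat d).mulVec u) (finSumFinEquiv (Sum.inr i)) = u (finSumFinEquiv (Sum.inl i)) := by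
  rw [Matrix.mulVec, dotProduct, ← Equiv.sum_comp finSumFinEquiv]
  simp only [Jmat, Matrix.reindex_apply, Matrix.submatrix_apply, Equiv.symm_apply_apply,
    Fintype.sum_sum_type]
  simp [Matrix.one_apply, ite_mul, Finset.sum_ite_eq]

lemma JF_Jmat_abs_le (d : ℕ) (a b : Fin (d+d)) : |Jmat d a b| ≤ 1 := by
  simp only [Jmat, Matrix.reindex_apply, Matrix.submatrix_apply]
  rcases finSumFinEquiv.symm a with i | i <;> rcases finSumFinEquiv.symm b with j | j <;>
    simp [Matrix.fromBlocks, Matrix.one_apply] <;> split <;> norm_num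

lemma JF_norm_mulVec_le {n : ℕ} {M : Matrix (Fin n) (Fin n) ℝ} {c : ℝ} (hc : 0 ≤ c)
    (hM : ∀ i j, |M i j| ≤ c) (v : Fin n → ℝ) : ‖M.mulVec v‖ ≤ n * c * ‖v‖ := by
  rw [pi_norm_le_iff_of_nonneg (by positivity)]
  intro i
  rw [Real.norm_eq_abs, Matrix.mulVec, dotProduct]
  calc |∑ j, M i j * v j| ≤ ∑ j, |M i j * v j| := Finset.abs_sum_le_sum_abs _ _
    _ ≤ ∑ _j : Fin n, c * ‖v‖ := Finset.sum_le_sum (fun j _ => by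
        rw [abs_mul]
        exact mul_le_mul (hM i j) (Real.norm_eq_abs (v j) ▸ norm_le_pi_norm v j)
          (abs_nonneg _) hc)
    _ = n * c * ‖v‖ := by
        rw [Finset.sum_const, Finset.card_univ, Fintype.card_fin, nsmul_eq_mul]; ring

lemma JF_integrableOn_bdd {h : ℝ → ℝ} {S : Set ℝ} (hS : MeasurableSet S)
    (hSfin : volume S < ⊤) (hm : AEStronglyMeasurable h (volume.restrict S))
    {C : ℝ} (hb : ∀ t ∈ S, |h t| ≤ C) : IntegrableOn h S := by
  refine ⟨hm, HasFiniteIntegral.restrict_of_bounded (C := C) hSfin ?_⟩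
  filter_upwards [ae_restrict_mem hS] with t ht using by
    simpa [Real.norm_eq_abs] using hb t ht

lemma JF_integrableOn_Ioc01 {h : ℝ → ℝ}
    (hm : AEStronglyMeasurable h (volume.restrict (Ioc (0:ℝ) 1)))
    {C : ℝ} (hb : ∀ t ∈ Ioc (0:ℝ) 1, |h t| ≤ C) : IntegrableOn h (Ioc (0:ℝ) 1) :=
  JF_integrableOn_bdd measurableSet_Ioc measure_Ioc_lt_top hm hb

lemma JF_integral_comp_proj {α : Type*} [MeasurableSpace α] {μ : Measure α} {n : ℕ}
    {h : α → Fin n → ℝ} (hint : Integrable h μ) (j : Fin n) :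
    (∫ x, h x ∂μ) j = ∫ x, h x j ∂μ := by
  have := (ContinuousLinearMap.proj (R := ℝ) (φ := fun _ : Fin n => ℝ) j).integral_comp_comm hint
  simpa using this.symm

lemma JF_M_entry_meas {d m : ℕ} (Z : ℝ → Matrix (Fin (d + d)) (Fin m) ℝ)
    (hZmeas : ∀ i j, Measurable fun t => Z t i j) (a b : Fin (d+d)) :
    Measurable fun τ => (Z τ * (Z τ)ᵀ * Jmat d) a b := by
  simp only [Matrix.mul_apply, Matrix.transpose_apply]
  refine Finset.measurable_sum _ fun k _ => ?_
  exact (Finset.measurable_sum _ fun l _ => (hZmeas a l).mul (hZmeas k l)).mul measurable_const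

lemma JF_M_entry_bound {d m : ℕ} (Z : ℝ → Matrix (Fin (d + d)) (Fin m) ℝ)
    {C : ℝ} (hC : ∀ t ∈ Icc (0:ℝ) 1, ∀ i j, |Z t i j| ≤ C) (hC0 : 0 ≤ C) :
    ∀ τ ∈ Icc (0:ℝ) 1, ∀ a b, |(Z τ * (Z τ)ᵀ * Jmat d) a b|
      ≤ ((d+d : ℕ) : ℝ) * (m * C^2) := by
  intro τ hτ a b
  simp only [Matrix.mul_apply, Matrix.transpose_apply]
  calc |∑ k, (∑ l, Z τ a l * Z τ k l) * Jmat d k b|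
      ≤ ∑ k, |(∑ l, Z τ a l * Z τ k l) * Jmat d k b| := Finset.abs_sum_le_sum_abs _ _
    _ ≤ ∑ _k : Fin (d+d), (m * C^2) * 1 := by
        refine Finset.sum_le_sum fun k _ => ?_
        rw [abs_mul]
        refine mul_le_mul ?_ (JF_Jmat_abs_le d k b) (abs_nonneg _) (by positivity)
        calc |∑ l, Z τ a l * Z τ k l| ≤ ∑ l, |Z τ a l * Z τ k l| :=
              Finset.abs_sum_le_sum_abs _ _
          _ ≤ ∑ _l : Fin m, C * C := by
              refine Finset.sum_le_sum fun l _ => ?_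
              rw [abs_mul]
              exact mul_le_mul (hC τ hτ a l) (hC τ hτ k l) (abs_nonneg _) hC0
          _ = m * C^2 := by
              rw [Finset.sum_const, Finset.card_univ, Fintype.card_fin, nsmul_eq_mul]; ring
    _ = ((d+d : ℕ) : ℝ) * (m * C^2) := by
        rw [Finset.sum_const, Finset.card_univ, Fintype.card_fin, nsmul_eq_mul]; ring

lemma JF_pointwise_key {d m : ℕ} (Zt : Matrix (Fin (d+d)) (Fin m) ℝ) (s : ℝ)
    (F G : Fin (d+d) → ℝ) :
    (Jmat d).mulVec (s • (Zt * Ztᵀ * Jmat d).mulVec F) ⬝ᵥ G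
      + (Jmat d).mulVec F ⬝ᵥ ((Zt * Ztᵀ * Jmat d).mulVec F + s • (Zt * Ztᵀ * Jmat d).mulVec G)
    = (Ztᵀ.mulVec ((Jmat d).mulVec F)) ⬝ᵥ (Ztᵀ.mulVec ((Jmat d).mulVec F)) := by
  have hJT := JF_Jmat_transpose d
  have hmm : (Jmat d * (Zt * Ztᵀ * Jmat d))ᵀ = -((Jmat d)ᵀ * (Zt * Ztᵀ * Jmat d)) := by
    rw [Matrix.transpose_mul, Matrix.transpose_mul, Matrix.transpose_mul,
      Matrix.transpose_transpose, hJT]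
    simp only [Matrix.neg_mul, Matrix.mul_neg, neg_neg, Matrix.mul_assoc]
  have term1 : (Jmat d).mulVec (s • (Zt * Ztᵀ * Jmat d).mulVec F) ⬝ᵥ G
      = s * (F ⬝ᵥ ((Jmat d * (Zt * Ztᵀ * Jmat d))ᵀ.mulVec G)) := by
    rw [Matrix.mulVec_smul, smul_dotProduct, smul_eq_mul, Matrix.mulVec_mulVec,
      JF_mulVec_dot]
  have term2b : (Jmat d).mulVec F ⬝ᵥ (s • (Zt * Ztᵀ * Jmat d).mulVec G)
      = s * (F ⬝ᵥ (((Jmat d)ᵀ * (Zt * Ztᵀ * Jmat d)).mulVec G)) := by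
    rw [dotProduct_smul, smul_eq_mul, JF_mulVec_dot (Jmat d) F, Matrix.mulVec_mulVec]
  have term2a : (Jmat d).mulVec F ⬝ᵥ ((Zt * Ztᵀ * Jmat d).mulVec F)
      = (Ztᵀ.mulVec ((Jmat d).mulVec F)) ⬝ᵥ (Ztᵀ.mulVec ((Jmat d).mulVec F)) := by
    have h1 : (Zt * Ztᵀ * Jmat d).mulVec F = Zt.mulVec (Ztᵀ.mulVec ((Jmat d).mulVec F)) := by
      rw [Matrix.mulVec_mulVec, Matrix.mulVec_mulVec, Matrix.mul_assoc]
    rw [h1, dotProduct_comm, JF_mulVec_dot]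
  rw [dotProduct_add, term1, term2b, term2a, hmm]
  rw [Matrix.neg_mulVec, dotProduct_neg]
  ring

/-- Integration by parts for primitives of integrable functions on `[0,1]`. -/
lemma JF_ibp_pair (f g F G : ℝ → ℝ)
    (hfm : AEStronglyMeasurable f (volume.restrict (Ioc (0:ℝ) 1)))
    (hgm : AEStronglyMeasurable g (volume.restrict (Ioc (0:ℝ) 1)))
    {Cf Cg : ℝ} (hfb : ∀ t ∈ Ioc (0:ℝ) 1, |f t| ≤ Cf) (hgb : ∀ t ∈ Ioc (0:ℝ) 1, |g t| ≤ Cg)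
    (hFc : Continuous F) (hGc : Continuous G)
    (hF : ∀ t ∈ Icc (0:ℝ) 1, F t = F 0 + ∫ τ in Ioc (0:ℝ) t, f τ)
    (hG : ∀ t ∈ Icc (0:ℝ) 1, G t = G 0 + ∫ τ in Ioc (0:ℝ) t, g τ) :
    ∫ t in Ioc (0:ℝ) 1, (f t * G t + F t * g t) = F 1 * G 1 - F 0 * G 0 := by
  set μ := volume.restrict (Ioc (0:ℝ) 1) with hμ
  have hf : Integrable f μ := JF_integrableOn_Ioc01 hfm hfb
  have hg : Integrable g μ := JF_integrableOn_Ioc01 hgm hgb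
  -- integrals over subintervals in terms of F, G
  have hIg : ∀ t ∈ Ioc (0:ℝ) 1, (∫ τ in Ioc (0:ℝ) t, g τ) = G t - G 0 := by
    intro t ht
    rw [hG t ⟨ht.1.le, ht.2⟩]; ring
  have hIf : ∀ t ∈ Ioc (0:ℝ) 1, (∫ τ in Ioc (0:ℝ) t, f τ) = F t - F 0 := by
    intro t ht
    rw [hF t ⟨ht.1.le, ht.2⟩]; ring
  set P : ℝ → ℝ → ℝ := fun t τ => f t * (Iic t).indicator g τ with hP
  set R : ℝ → ℝ → ℝ := fun t τ => (Iic τ).indicator f t * g τ with hR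
  have hRalt : ∀ t τ, R t τ = f t * (Ici t).indicator g τ := by
    intro t τ
    simp only [hR, Set.indicator_apply, mem_Iic, mem_Ici, ite_mul, mul_ite, zero_mul, mul_zero]
  -- step A
  have stepA : ∀ t ∈ Ioc (0:ℝ) 1, (∫ τ, P t τ ∂μ) = f t * (G t - G 0) := by
    intro t ht
    rw [hP]
    simp only
    rw [integral_const_mul, hμ, setIntegral_indicator measurableSet_Iic, Set.Ioc_inter_Iic,
      min_eq_right ht.2, hIg t ht]
  -- step B
  have stepB : ∀ τ ∈ Ioc (0:ℝ) 1, (∫ t, R t τ ∂μ) = (F τ - F 0) * g τ := by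
    intro τ hτ
    rw [hR]
    simp only
    rw [integral_mul_const, hμ, setIntegral_indicator measurableSet_Iic, Set.Ioc_inter_Iic,
      min_eq_right hτ.2, hIf τ hτ]
  -- step C
  have hIocIci : ∀ t ∈ Ioc (0:ℝ) 1, Ioc (0:ℝ) 1 ∩ Ici t = Icc t 1 := by
    intro t ht
    ext τ
    simp only [mem_inter_iff, mem_Ioc, mem_Ici, mem_Icc]
    constructor
    · rintro ⟨⟨_, h2⟩, h3⟩; exact ⟨h3, h2⟩
    · rintro ⟨h1, h2⟩; exact ⟨⟨lt_of_lt_of_le ht.1 h1, h2⟩, h1⟩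
  have stepC : ∀ t ∈ Ioc (0:ℝ) 1, (∫ τ, R t τ ∂μ) = f t * (G 1 - G t) := by
    intro t ht
    have : (∫ τ, R t τ ∂μ) = f t * ∫ τ, (Ici t).indicator g τ ∂μ := by
      rw [← integral_const_mul]
      exact integral_congr_ae (Filter.Eventually.of_forall fun τ => hRalt t τ)
    rw [this, hμ, setIntegral_indicator measurableSet_Ici, hIocIci t ht,
      integral_Icc_eq_integral_Ioc]
    have hsplit : (∫ τ in Ioc (0:ℝ) 1, g τ) = (∫ τ in Ioc (0:ℝ) t, g τ) + ∫ τ in Ioc t 1, g τ := by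
      rw [← setIntegral_union (Set.Ioc_disjoint_Ioc_of_le le_rfl) measurableSet_Ioc
        (IntegrableOn.mono_set hg (fun τ hτ => ⟨hτ.1, hτ.2.trans ht.2⟩))
        (IntegrableOn.mono_set hg (fun τ hτ => ⟨lt_of_le_of_lt ht.1.le (lt_of_lt_of_le hτ.1 le_rfl), hτ.2⟩)),
        Set.Ioc_union_Ioc_eq_Ioc ht.1.le ht.2]
    have h1 : (∫ τ in Ioc (0:ℝ) 1, g τ) = G 1 - G 0 := hIg 1 ⟨one_pos, le_rfl⟩
    have h2 : (∫ τ in Ioc (0:ℝ) t, g τ) = G t - G 0 := hIg t ht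
    have : (∫ τ in Ioc t 1, g τ) = G 1 - G t := by
      have := hsplit
      rw [h1, h2] at this; linarith
    rw [this]
  -- bounds for F and G on the unit interval
  obtain ⟨CG, hCG⟩ := isCompact_Icc.exists_bound_of_continuousOn
    (s := Icc (0:ℝ) 1) hGc.continuousOn
  obtain ⟨CF, hCF⟩ := isCompact_Icc.exists_bound_of_continuousOn
    (s := Icc (0:ℝ) 1) hFc.continuousOn
  have hmem : ∀ t ∈ Ioc (0:ℝ) 1, t ∈ Icc (0:ℝ) 1 := fun t ht => ⟨ht.1.le, ht.2⟩
  have h01 : (0:ℝ) ∈ Icc (0:ℝ) 1 := ⟨le_rfl, zero_le_one⟩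
  -- integrability of auxiliary products
  have int_fG : Integrable (fun t => f t * (G t - G 0)) μ := by
    refine JF_integrableOn_Ioc01 (hfm.mul ((hGc.sub continuous_const).aestronglyMeasurable.restrict))
      (C := Cf * (CG + CG)) fun t ht => ?_
    rw [abs_mul]
    refine mul_le_mul (hfb t ht) ?_ (abs_nonneg _) ((abs_nonneg _).trans (hfb t ht))
    calc |G t - G 0| ≤ |G t| + |G 0| := abs_sub _ _
      _ ≤ CG + CG := add_le_add (hCG t (hmem t ht)) (hCG 0 h01)
  have int_fG1 : Integrable (fun t => f t * (G 1 - G t)) μ := by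
    refine JF_integrableOn_Ioc01 (hfm.mul ((continuous_const.sub hGc).aestronglyMeasurable.restrict))
      (C := Cf * (CG + CG)) fun t ht => ?_
    rw [abs_mul]
    refine mul_le_mul (hfb t ht) ?_ (abs_nonneg _) ((abs_nonneg _).trans (hfb t ht))
    calc |G 1 - G t| ≤ |G 1| + |G t| := abs_sub _ _
      _ ≤ CG + CG := add_le_add (hCG 1 ⟨zero_le_one, le_rfl⟩) (hCG t (hmem t ht))
  have int_Fg : Integrable (fun t => (F t - F 0) * g t) μ := by
    refine JF_integrableOn_Ioc01 (((hFc.sub continuous_const).aestronglyMeasurable.restrict).mul hgm)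
      (C := (CF + CF) * Cg) fun t ht => ?_
    rw [abs_mul]
    refine mul_le_mul ?_ (hgb t ht) (abs_nonneg _) ?_
    · calc |F t - F 0| ≤ |F t| + |F 0| := abs_sub _ _
        _ ≤ CF + CF := add_le_add (hCF t (hmem t ht)) (hCF 0 h01)
    · exact add_nonneg ((norm_nonneg (F 0)).trans (hCF 0 h01))
        ((norm_nonneg (F 0)).trans (hCF 0 h01))
  -- per-t integrability of P and R
  have int_P : ∀ t, Integrable (P t) μ :=
    fun t => (hg.indicator measurableSet_Iic).const_mul (f t)
  have int_R : ∀ t, Integrable (R t) μ := by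
    intro t
    have base : Integrable ((Ici t).indicator (fun τ => f t * g τ)) μ :=
      (hg.const_mul (f t)).indicator measurableSet_Ici
    refine base.congr (Filter.Eventually.of_forall fun τ => ?_)
    rw [hRalt]
    simp [Set.indicator_apply, mul_ite]
  -- a.e. versions of the step identities
  have aeP : (fun t => ∫ τ, P t τ ∂μ) =ᵐ[μ] fun t => f t * (G t - G 0) := by
    filter_upwards [ae_restrict_mem measurableSet_Ioc] with t ht using stepA t ht
  have aeR : (fun t => ∫ τ, R t τ ∂μ) =ᵐ[μ] fun t => f t * (G 1 - G t) := by
    filter_upwards [ae_restrict_mem measurableSet_Ioc] with t ht using stepC t ht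
  have aeRB : (fun τ => ∫ t, R t τ ∂μ) =ᵐ[μ] fun τ => (F τ - F 0) * g τ := by
    filter_upwards [ae_restrict_mem measurableSet_Ioc] with τ hτ using stepB τ hτ
  have int_iP : Integrable (fun t => ∫ τ, P t τ ∂μ) μ := int_fG.congr aeP.symm
  have int_iR : Integrable (fun t => ∫ τ, R t τ ∂μ) μ := int_fG1.congr aeR.symm
  -- Fubini swap for R
  have swapR : ∫ t, (∫ τ, R t τ ∂μ) ∂μ = ∫ τ, (∫ t, R t τ ∂μ) ∂μ := by
    apply integral_integral_swap
    have huncurry : Function.uncurry R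
        = {p : ℝ × ℝ | p.1 ≤ p.2}.indicator (fun p => f p.1 * g p.2) := by
      funext p
      simp [Function.uncurry, hR, Set.indicator_apply, ite_mul]
    rw [huncurry]
    exact (hf.mul_prod hg).indicator (measurableSet_le measurable_fst measurable_snd)
  -- the diagonal contributes nothing
  have diag_ae : ∀ t : ℝ, (fun τ => if τ = t then f t * g τ else 0) =ᵐ[μ] 0 := by
    intro t
    have hnull : μ {t} = 0 := by
      rw [hμ, Measure.restrict_apply (measurableSet_singleton t)]
      exact measure_mono_null inter_subset_left Real.volume_singleton
    rw [Filter.EventuallyEq, ae_iff]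
    refine measure_mono_null (fun τ hτ => ?_) hnull
    simp only [mem_setOf_eq, Pi.zero_apply] at hτ
    simp only [mem_singleton_iff]
    by_contra h
    exact hτ (if_neg h)
  have diag0 : ∀ t : ℝ, (∫ τ, (if τ = t then f t * g τ else 0) ∂μ) = 0 :=
    fun t => integral_eq_zero_of_ae (diag_ae t)
  -- inner sum identity, valid for every t
  have innerPR : ∀ t, (∫ τ, P t τ ∂μ) + (∫ τ, R t τ ∂μ) = f t * ∫ τ, g τ ∂μ := by
    intro t
    rw [← integral_add (int_P t) (int_R t)]
    have hpt : ∀ τ, P t τ + R t τ = f t * g τ + (if τ = t then f t * g τ else 0) := by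
      intro τ
      rw [hRalt]
      simp only [hP, Set.indicator_apply, mem_Iic, mem_Ici, mul_ite, mul_zero]
      rcases lt_trichotomy τ t with h | h | h
      · rw [if_pos h.le, if_neg (not_le.2 h), if_neg (ne_of_lt h)]
        try ring
      · subst h
        simp
      · rw [if_neg (not_le.2 h), if_pos h.le, if_neg (ne_of_gt h)]
        try ring
    have hdint : Integrable (fun τ => if τ = t then f t * g τ else 0) μ :=
      (integrable_zero _ _ _).congr (diag_ae t).symm
    rw [integral_congr_ae (Filter.Eventually.of_forall hpt),
      integral_add (hg.const_mul (f t)) hdint, diag0 t, integral_const_mul, add_zero]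
  -- main Fubini identity
  have KEY : ∫ t, (f t * (G t - G 0) + (F t - F 0) * g t) ∂μ
      = (∫ t, f t ∂μ) * ∫ t, g t ∂μ := by
    rw [integral_add int_fG int_Fg, ← integral_congr_ae aeP, ← integral_congr_ae aeRB,
      ← swapR, ← integral_add int_iP int_iR,
      integral_congr_ae (Filter.Eventually.of_forall innerPR), integral_mul_const]
  -- conclusion
  have hf1 : (∫ t, f t ∂μ) = F 1 - F 0 := hIf 1 ⟨one_pos, le_rfl⟩
  have hg1 : (∫ t, g t ∂μ) = G 1 - G 0 := hIg 1 ⟨one_pos, le_rfl⟩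
  have expand : ∀ t, f t * G t + F t * g t
      = (f t * (G t - G 0) + (F t - F 0) * g t) + (G 0 * f t + F 0 * g t) := fun t => by ring
  have intA : Integrable (fun t => f t * (G t - G 0) + (F t - F 0) * g t) μ :=
    int_fG.add int_Fg
  have intB : Integrable (fun t => G 0 * f t + F 0 * g t) μ :=
    (hf.const_mul (G 0)).add (hg.const_mul (F 0))
  rw [integral_congr_ae (Filter.Eventually.of_forall expand),
    integral_add intA intB, KEY,
    integral_add (hf.const_mul (G 0)) (hg.const_mul (F 0)), integral_const_mul, integral_const_mul,
    hf1, hg1]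
  ring

/-- The variational (linearized) integral equation for `∂ηˢ/∂s`. -/
lemma JF_variational
    (d m : ℕ) (hd : 0 < d) (hm : 0 < m)
    (Z : ℝ → Matrix (Fin (d + d)) (Fin m) ℝ)
    (hZmeas : ∀ i j, Measurable fun t => Z t i j)
    (hZbdd : ∃ C : ℝ, ∀ t ∈ Set.Icc (0:ℝ) 1, ∀ i j, |Z t i j| ≤ C)
    (η ηs : ℝ → ℝ → Fin (d + d) → ℝ)
    (hηcont : Continuous fun p : ℝ × ℝ => η p.1 p.2)
    (hηscont : Continuous fun p : ℝ × ℝ => ηs p.1 p.2)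
    (hsol : ∀ u : ℝ, ∀ t ∈ Set.Icc (0:ℝ) 1,
      η u t = η u 0 + ∫ τ in (0:ℝ)..t, u • (Z τ * (Z τ)ᵀ * Jmat d).mulVec (η u τ))
    (hηderiv : ∀ (s t : ℝ), HasDerivAt (fun u : ℝ => η u t) (ηs s t) s) :
    ∀ s : ℝ, ∀ t ∈ Set.Icc (0:ℝ) 1,
      ηs s t = ηs s 0 + ∫ τ in (0:ℝ)..t,
        ((Z τ * (Z τ)ᵀ * Jmat d).mulVec (η s τ)
          + s • (Z τ * (Z τ)ᵀ * Jmat d).mulVec (ηs s τ)) := by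
  obtain ⟨C, hC⟩ := hZbdd
  have hC0 : 0 ≤ C := le_trans (abs_nonneg _)
    (hC 0 ⟨le_rfl, zero_le_one⟩ ⟨0, by omega⟩ ⟨0, hm⟩)
  set M : ℝ → Matrix (Fin (d+d)) (Fin (d+d)) ℝ := fun τ => Z τ * (Z τ)ᵀ * Jmat d with hM
  have Jabs : ∀ a b, |Jmat d a b| ≤ 1 := JF_Jmat_abs_le d
  have hMb : ∀ τ ∈ Icc (0:ℝ) 1, ∀ a b, |M τ a b| ≤ ((d+d : ℕ) : ℝ) * (m * C^2) := by
    intro τ hτ a b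
    simp only [hM, Matrix.mul_apply, Matrix.transpose_apply]
    calc |∑ k, (∑ l, Z τ a l * Z τ k l) * Jmat d k b|
        ≤ ∑ k, |(∑ l, Z τ a l * Z τ k l) * Jmat d k b| := Finset.abs_sum_le_sum_abs _ _
      _ ≤ ∑ _k : Fin (d+d), (m * C^2) * 1 := by
          refine Finset.sum_le_sum fun k _ => ?_
          rw [abs_mul]
          refine mul_le_mul ?_ (Jabs k b) (abs_nonneg _) (by positivity)
          calc |∑ l, Z τ a l * Z τ k l| ≤ ∑ l, |Z τ a l * Z τ k l| :=
                Finset.abs_sum_le_sum_abs _ _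
            _ ≤ ∑ _l : Fin m, C * C := by
                refine Finset.sum_le_sum fun l _ => ?_
                rw [abs_mul]
                exact mul_le_mul (hC τ hτ a l) (hC τ hτ k l) (abs_nonneg _) hC0
            _ = m * C^2 := by
                rw [Finset.sum_const, Finset.card_univ, Fintype.card_fin, nsmul_eq_mul]; ring
      _ = ((d+d : ℕ) : ℝ) * (m * C^2) := by
          rw [Finset.sum_const, Finset.card_univ, Fintype.card_fin, nsmul_eq_mul]; ring
  have hMmeas : ∀ a b, Measurable fun τ => M τ a b := by
    intro a b
    simp only [hM, Matrix.mul_apply, Matrix.transpose_apply]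
    refine Finset.measurable_sum _ fun k _ => ?_
    exact ((Finset.measurable_sum _ fun l _ => (hZmeas a l).mul (hZmeas k l)).mul
      measurable_const)
  set CM : ℝ := ((d+d : ℕ) : ℝ) * (m * C^2) with hCM
  have hCM0 : 0 ≤ CM := by positivity
  intro s t ht
  -- bounds for η and ηs on a compact neighbourhood
  set K : Set (ℝ × ℝ) := Icc (s-1) (s+1) ×ˢ Icc (0:ℝ) 1 with hK
  have hKc : IsCompact K := isCompact_Icc.prod isCompact_Icc
  obtain ⟨C1, hC1⟩ := hKc.exists_bound_of_continuousOn hηcont.continuousOn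
  obtain ⟨C2, hC2⟩ := hKc.exists_bound_of_continuousOn hηscont.continuousOn
  have hC10 : 0 ≤ C1 := le_trans (norm_nonneg _)
    (hC1 (s, 0) ⟨⟨by linarith, by linarith⟩, le_rfl, zero_le_one⟩)
  have hC20 : 0 ≤ C2 := le_trans (norm_nonneg _)
    (hC2 (s, 0) ⟨⟨by linarith, by linarith⟩, le_rfl, zero_le_one⟩)
  set F : ℝ → ℝ → (Fin (d+d) → ℝ) := fun u τ => u • (M τ).mulVec (η u τ) with hF
  set F' : ℝ → ℝ → (Fin (d+d) → ℝ) :=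
    fun u τ => (M τ).mulVec (η u τ) + u • (M τ).mulVec (ηs u τ) with hF'
  have hcη : ∀ x : ℝ, Continuous fun τ => η x τ :=
    fun x => hηcont.comp (Continuous.prodMk_right x)
  have hcηs : ∀ x : ℝ, Continuous fun τ => ηs x τ :=
    fun x => hηscont.comp (Continuous.prodMk_right x)
  have hmemIcc : ∀ τ ∈ Set.uIoc (0:ℝ) t, τ ∈ Icc (0:ℝ) 1 := by
    intro τ hτ
    rw [Set.uIoc_of_le ht.1] at hτ
    exact ⟨hτ.1.le, hτ.2.trans ht.2⟩
  have measF : ∀ x : ℝ, AEStronglyMeasurable (F x) (volume.restrict (Set.uIoc (0:ℝ) t)) := by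
    intro x
    refine (Measurable.aestronglyMeasurable (measurable_pi_lambda _ fun a => ?_))
    simp only [hF, Pi.smul_apply, Matrix.mulVec, dotProduct, smul_eq_mul]
    exact measurable_const.mul (Finset.measurable_sum _ fun b _ => (hMmeas a b).mul
      (((continuous_apply b).comp (hcη x)).measurable))
  have measF' : AEStronglyMeasurable (F' s) (volume.restrict (Set.uIoc (0:ℝ) t)) := by
    refine (Measurable.aestronglyMeasurable (measurable_pi_lambda _ fun a => ?_))
    simp only [hF', Pi.add_apply, Pi.smul_apply, Matrix.mulVec, dotProduct, smul_eq_mul]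
    refine ((Finset.measurable_sum _ fun b _ => (hMmeas a b).mul
      (((continuous_apply b).comp (hcη s)).measurable)).add
      (measurable_const.mul (Finset.measurable_sum _ fun b _ => (hMmeas a b).mul
      (((continuous_apply b).comp (hcηs s)).measurable))))
  have hDer : ∀ (u τ : ℝ), HasDerivAt (fun x : ℝ => F x τ) (F' u τ) u := by
    intro u τ
    have L := (LinearMap.toContinuousLinearMap ((M τ).mulVecLin)).hasFDerivAt.comp_hasDerivAt
      u (hηderiv u τ)
    have h1 : HasDerivAt (fun x : ℝ => (M τ).mulVec (η x τ)) ((M τ).mulVec (ηs u τ)) u := by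
      exact L
    refine HasDerivAt.congr_deriv ((hasDerivAt_id u).smul h1) ?_
    simp only [hF', id, one_smul]; exact add_comm _ _
  have habs : ∀ x ∈ Metric.ball s 1, |x| ≤ |s| + 1 := by
    intro x hx
    rw [Metric.mem_ball, Real.dist_eq] at hx
    have h2 := abs_lt.1 hx
    rcases abs_cases x with ⟨h3, _⟩ | ⟨h3, _⟩ <;> rcases abs_cases s with ⟨h4, _⟩ | ⟨h4, _⟩ <;>
      linarith
  have hxK : ∀ x ∈ Metric.ball s 1, x ∈ Icc (s-1) (s+1) := by
    intro x hx
    rw [Metric.mem_ball, Real.dist_eq] at hx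
    have h2 := abs_lt.1 hx
    exact ⟨by linarith, by linarith⟩
  have normF_le : ∀ x ∈ Metric.ball s 1, ∀ τ ∈ Set.uIoc (0:ℝ) t,
      ‖F x τ‖ ≤ (|s|+1) * (((d+d:ℕ):ℝ) * CM * C1) := by
    intro x hx τ hτ
    have hη : ‖η x τ‖ ≤ C1 := hC1 (x, τ) ⟨hxK x hx, hmemIcc τ hτ⟩
    have h5 : ‖(M τ).mulVec (η x τ)‖ ≤ ((d+d:ℕ):ℝ) * CM * C1 :=
      le_trans (JF_norm_mulVec_le hCM0 (hMb τ (hmemIcc τ hτ)) _)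
        (mul_le_mul_of_nonneg_left hη (by positivity))
    calc ‖F x τ‖ = |x| * ‖(M τ).mulVec (η x τ)‖ := by
          rw [hF]; simp [norm_smul]
      _ ≤ (|s|+1) * (((d+d:ℕ):ℝ) * CM * C1) :=
          mul_le_mul (habs x hx) h5 (norm_nonneg _) (by positivity)
  set B : ℝ := ((d+d:ℕ):ℝ) * CM * C1 + (|s|+1) * (((d+d:ℕ):ℝ) * CM * C2) with hB
  have normF'_le : ∀ x ∈ Metric.ball s 1, ∀ τ ∈ Set.uIoc (0:ℝ) t, ‖F' x τ‖ ≤ B := by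
    intro x hx τ hτ
    have hη : ‖η x τ‖ ≤ C1 := hC1 (x, τ) ⟨hxK x hx, hmemIcc τ hτ⟩
    have hηs : ‖ηs x τ‖ ≤ C2 := hC2 (x, τ) ⟨hxK x hx, hmemIcc τ hτ⟩
    have h5 : ‖(M τ).mulVec (η x τ)‖ ≤ ((d+d:ℕ):ℝ) * CM * C1 :=
      le_trans (JF_norm_mulVec_le hCM0 (hMb τ (hmemIcc τ hτ)) _)
        (mul_le_mul_of_nonneg_left hη (by positivity))
    have h6 : ‖(M τ).mulVec (ηs x τ)‖ ≤ ((d+d:ℕ):ℝ) * CM * C2 :=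
      le_trans (JF_norm_mulVec_le hCM0 (hMb τ (hmemIcc τ hτ)) _)
        (mul_le_mul_of_nonneg_left hηs (by positivity))
    calc ‖F' x τ‖ ≤ ‖(M τ).mulVec (η x τ)‖ + ‖x • (M τ).mulVec (ηs x τ)‖ := by
          rw [hF']; exact norm_add_le _ _
      _ ≤ ((d+d:ℕ):ℝ) * CM * C1 + (|s|+1) * (((d+d:ℕ):ℝ) * CM * C2) := by
          refine add_le_add h5 ?_
          rw [norm_smul, Real.norm_eq_abs]
          exact mul_le_mul (habs x hx) h6 (norm_nonneg _) (by positivity)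
      _ = B := hB.symm
  have hFint : IntervalIntegrable (F s) volume 0 t := by
    rw [intervalIntegrable_iff]
    refine ⟨measF s, HasFiniteIntegral.restrict_of_bounded
      (C := (|s|+1) * (((d+d:ℕ):ℝ) * CM * C1))
      (by rw [Set.uIoc_of_le ht.1]; exact measure_Ioc_lt_top) ?_⟩
    filter_upwards [ae_restrict_mem measurableSet_uIoc] with τ hτ using
      normF_le s (Metric.mem_ball_self one_pos) τ hτ
  have key := (intervalIntegral.hasDerivAt_integral_of_dominated_loc_of_deriv_le
    (F := F) (F' := F') (x₀ := s) (a := 0) (b := t) (μ := volume) (bound := fun _ => B)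
    (Metric.ball_mem_nhds s one_pos) (Filter.Eventually.of_forall measF) hFint measF'
    (Filter.Eventually.of_forall fun τ hτ x hx => normF'_le x hx τ hτ)
    intervalIntegrable_const
    (Filter.Eventually.of_forall fun τ _ x _ => hDer x τ)).2
  have heq : (fun x : ℝ => ∫ τ in (0:ℝ)..t, F x τ) = fun x => η x t - η x 0 := by
    funext x
    simp only [hF]
    rw [hsol x t ht, add_sub_cancel_left]
  rw [heq] at key
  have hD2 : HasDerivAt (fun x : ℝ => η x t - η x 0) (ηs s t - ηs s 0) s :=
    (hηderiv s t).sub (hηderiv s 0)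
  have hval := key.unique hD2
  simp only [hF'] at hval
  rw [hval]
  abel

end JFAux

/-- **Lemma 1.**  For a C¹ family `ηˢ` of solutions of `η̇ = s Z_t Z_tᵀ J η` with
`q`-component of `ηˢ(0)` vanishing, if `⟨J ηˢ(1), ∂ηˢ/∂s(1)⟩ = 0` then `ηˢ(1) = 0`
(provided `Γ₁ = ∫₀¹ X_t X_tᵀ dt` is invertible). -/
theorem jacobi_family_endpoint_vanishes
    (d m : ℕ) (hd : 0 < d) (hm : 0 < m)
    (Z : ℝ → Matrix (Fin (d + d)) (Fin m) ℝ)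
    (hZmeas : ∀ i j, Measurable fun t => Z t i j)
    (hZbdd : ∃ C : ℝ, ∀ t ∈ Set.Icc (0:ℝ) 1, ∀ i j, |Z t i j| ≤ C)
    (hΓinv : IsUnit (mSetIntegral (Set.Icc (0:ℝ) 1)
      (fun t => Xblock Z t * (Xblock Z t)ᵀ)).det)
    (η ηs : ℝ → ℝ → Fin (d + d) → ℝ)
    (hηcont : Continuous fun p : ℝ × ℝ => η p.1 p.2)
    (hηscont : Continuous fun p : ℝ × ℝ => ηs p.1 p.2)
    (hηsol : ∀ s : ℝ, IsScaledJacobiSolution Z s (η s))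
    (hηderiv : ∀ (s t : ℝ), HasDerivAt (fun u : ℝ => η u t) (ηs s t) s)
    (hq0 : ∀ (s : ℝ) (i : Fin d), η s 0 (finSumFinEquiv (Sum.inr i)) = 0) :
    ∀ s : ℝ, ((Jmat d).mulVec (η s 1)) ⬝ᵥ ηs s 1 = 0 → η s 1 = 0 := by
  obtain ⟨C, hC⟩ := hZbdd
  have hC0 : 0 ≤ C := le_trans (abs_nonneg _) (hC 0 ⟨le_rfl, zero_le_one⟩ ⟨0, by omega⟩ ⟨0, hm⟩)
  have hsol : ∀ u : ℝ, ∀ t ∈ Set.Icc (0:ℝ) 1,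
      η u t = η u 0 + ∫ τ in (0:ℝ)..t, u • (Z τ * (Z τ)ᵀ * Jmat d).mulVec (η u τ) :=
    fun u => hηsol u
  have hvar := JF_variational d m hd hm Z hZmeas ⟨C, hC⟩ η ηs hηcont hηscont hsol hηderiv
  set CM : ℝ := ((d+d : ℕ) : ℝ) * (m * C^2) with hCM
  have hCM0 : 0 ≤ CM := by positivity
  have hMmeas : ∀ a b, Measurable fun τ => (Z τ * (Z τ)ᵀ * Jmat d) a b :=
    JF_M_entry_meas Z hZmeas
  have hMb : ∀ τ ∈ Icc (0:ℝ) 1, ∀ a b, |(Z τ * (Z τ)ᵀ * Jmat d) a b| ≤ CM :=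
    JF_M_entry_bound Z hC hC0
  intro s h0
  -- continuity and bounds for the fixed parameter value `s`
  have hcη : Continuous fun τ => η s τ := hηcont.comp (Continuous.prodMk_right s)
  have hcηs : Continuous fun τ => ηs s τ := hηscont.comp (Continuous.prodMk_right s)
  have hcηj : ∀ j, Continuous fun τ => η s τ j := fun j => (continuous_apply j).comp hcη
  have hcηsj : ∀ j, Continuous fun τ => ηs s τ j := fun j => (continuous_apply j).comp hcηs
  obtain ⟨C1, hC1⟩ := (isCompact_Icc (a := (0:ℝ)) (b := 1)).exists_bound_of_continuousOn
    hcη.continuousOn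
  obtain ⟨C2, hC2⟩ := (isCompact_Icc (a := (0:ℝ)) (b := 1)).exists_bound_of_continuousOn
    hcηs.continuousOn
  have hC10 : 0 ≤ C1 := le_trans (norm_nonneg _) (hC1 0 ⟨le_rfl, zero_le_one⟩)
  have hC20 : 0 ≤ C2 := le_trans (norm_nonneg _) (hC2 0 ⟨le_rfl, zero_le_one⟩)
  have hη_abs : ∀ t ∈ Icc (0:ℝ) 1, ∀ j, |η s t j| ≤ C1 := fun t ht j =>
    le_trans (Real.norm_eq_abs _ ▸ norm_le_pi_norm (η s t) j) (hC1 t ht)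
  have hηs_abs : ∀ t ∈ Icc (0:ℝ) 1, ∀ j, |ηs s t j| ≤ C2 := fun t ht j =>
    le_trans (Real.norm_eq_abs _ ▸ norm_le_pi_norm (ηs s t) j) (hC2 t ht)
  -- the two vector fields appearing in the two integral equations
  set fv : ℝ → Fin (d+d) → ℝ := fun τ => s • (Z τ * (Z τ)ᵀ * Jmat d).mulVec (η s τ) with hfv
  set gv : ℝ → Fin (d+d) → ℝ := fun τ => ((Z τ * (Z τ)ᵀ * Jmat d).mulVec (η s τ)
    + s • (Z τ * (Z τ)ᵀ * Jmat d).mulVec (ηs s τ)) with hgv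
  have hfvm : ∀ j, Measurable fun τ => fv τ j := by
    intro j
    simp only [hfv, Pi.smul_apply, Matrix.mulVec, dotProduct, smul_eq_mul]
    exact measurable_const.mul (Finset.measurable_sum _ fun b _ =>
      (hMmeas j b).mul ((continuous_apply b).comp hcη).measurable)
  have hgvm : ∀ j, Measurable fun τ => gv τ j := by
    intro j
    simp only [hgv, Pi.add_apply, Pi.smul_apply, Matrix.mulVec, dotProduct, smul_eq_mul]
    exact (Finset.measurable_sum _ fun b _ =>
      (hMmeas j b).mul ((continuous_apply b).comp hcη).measurable).add
      (measurable_const.mul (Finset.measurable_sum _ fun b _ =>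
      (hMmeas j b).mul ((continuous_apply b).comp hcηs).measurable))
  set Bf : ℝ := |s| * (((d+d:ℕ):ℝ) * CM * C1) with hBf
  set Bg : ℝ := ((d+d:ℕ):ℝ) * CM * C1 + |s| * (((d+d:ℕ):ℝ) * CM * C2) with hBg
  have hBf0 : 0 ≤ Bf := by
    rw [hBf]; positivity
  have hBg0 : 0 ≤ Bg := by
    rw [hBg]; positivity
  have hMη : ∀ τ ∈ Icc (0:ℝ) 1, ‖(Z τ * (Z τ)ᵀ * Jmat d).mulVec (η s τ)‖
      ≤ ((d+d:ℕ):ℝ) * CM * C1 := fun τ hτ =>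
    le_trans (JF_norm_mulVec_le hCM0 (hMb τ hτ) _)
      (mul_le_mul_of_nonneg_left (hC1 τ hτ) (by positivity))
  have hMηs : ∀ τ ∈ Icc (0:ℝ) 1, ‖(Z τ * (Z τ)ᵀ * Jmat d).mulVec (ηs s τ)‖
      ≤ ((d+d:ℕ):ℝ) * CM * C2 := fun τ hτ =>
    le_trans (JF_norm_mulVec_le hCM0 (hMb τ hτ) _)
      (mul_le_mul_of_nonneg_left (hC2 τ hτ) (by positivity))
  have hfv_norm : ∀ τ ∈ Icc (0:ℝ) 1, ‖fv τ‖ ≤ Bf := by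
    intro τ hτ
    rw [hfv, hBf]
    simp only [norm_smul, Real.norm_eq_abs]
    exact mul_le_mul_of_nonneg_left (hMη τ hτ) (abs_nonneg s)
  have hgv_norm : ∀ τ ∈ Icc (0:ℝ) 1, ‖gv τ‖ ≤ Bg := by
    intro τ hτ
    rw [hgv, hBg]
    refine le_trans (norm_add_le _ _) (add_le_add (hMη τ hτ) ?_)
    rw [norm_smul, Real.norm_eq_abs]
    exact mul_le_mul_of_nonneg_left (hMηs τ hτ) (abs_nonneg s)
  have hfv_abs : ∀ τ ∈ Icc (0:ℝ) 1, ∀ j, |fv τ j| ≤ Bf := fun τ hτ j =>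
    le_trans (Real.norm_eq_abs _ ▸ norm_le_pi_norm (fv τ) j) (hfv_norm τ hτ)
  have hgv_abs : ∀ τ ∈ Icc (0:ℝ) 1, ∀ j, |gv τ j| ≤ Bg := fun τ hτ j =>
    le_trans (Real.norm_eq_abs _ ▸ norm_le_pi_norm (gv τ) j) (hgv_norm τ hτ)
  have hfvint : ∀ t ∈ Icc (0:ℝ) 1, IntegrableOn fv (Ioc (0:ℝ) t) := by
    intro t ht
    refine ⟨(measurable_pi_lambda _ hfvm).aestronglyMeasurable,
      HasFiniteIntegral.restrict_of_bounded (C := Bf) measure_Ioc_lt_top ?_⟩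
    filter_upwards [ae_restrict_mem measurableSet_Ioc] with τ hτ using
      hfv_norm τ ⟨hτ.1.le, hτ.2.trans ht.2⟩
  have hgvint : ∀ t ∈ Icc (0:ℝ) 1, IntegrableOn gv (Ioc (0:ℝ) t) := by
    intro t ht
    refine ⟨(measurable_pi_lambda _ hgvm).aestronglyMeasurable,
      HasFiniteIntegral.restrict_of_bounded (C := Bg) measure_Ioc_lt_top ?_⟩
    filter_upwards [ae_restrict_mem measurableSet_Ioc] with τ hτ using
      hgv_norm τ ⟨hτ.1.le, hτ.2.trans ht.2⟩
  -- componentwise integral equations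
  have compF : ∀ j, ∀ t ∈ Icc (0:ℝ) 1, η s t j = η s 0 j + ∫ τ in Ioc (0:ℝ) t, fv τ j := by
    intro j t ht
    have h1 := hsol s t ht
    rw [intervalIntegral.integral_of_le ht.1, ← hfv] at h1
    have h2 := congrFun h1 j
    rw [Pi.add_apply, JF_integral_comp_proj (hfvint t ht) j] at h2
    exact h2
  have compG : ∀ j, ∀ t ∈ Icc (0:ℝ) 1, ηs s t j = ηs s 0 j + ∫ τ in Ioc (0:ℝ) t, gv τ j := by
    intro j t ht
    have h1 := hvar s t ht
    rw [intervalIntegral.integral_of_le ht.1, ← hgv] at h1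
    have h2 := congrFun h1 j
    rw [Pi.add_apply, JF_integral_comp_proj (hgvint t ht) j] at h2
    exact h2
  -- integration by parts componentwise
  have ibpji : ∀ i j, (∫ t in Ioc (0:ℝ) 1, (fv t j * ηs s t i + η s t j * gv t i))
      = η s 1 j * ηs s 1 i - η s 0 j * ηs s 0 i := by
    intro i j
    exact JF_ibp_pair (fun t => fv t j) (fun t => gv t i) (fun t => η s t j)
      (fun t => ηs s t i) ((hfvm j).aestronglyMeasurable) ((hgvm i).aestronglyMeasurable)
      (fun t ht => hfv_abs t ⟨ht.1.le, ht.2⟩ j) (fun t ht => hgv_abs t ⟨ht.1.le, ht.2⟩ i)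
      (hcηj j) (hcηsj i) (compF j) (compG i)
  have int_ij : ∀ (i j : Fin (d+d)),
      Integrable (fun t => fv t j * ηs s t i + η s t j * gv t i)
        (volume.restrict (Ioc (0:ℝ) 1)) := by
    intro i j
    refine JF_integrableOn_Ioc01
      ((((hfvm j).mul (hcηsj i).measurable).add
        ((hcηj j).measurable.mul (hgvm i))).aestronglyMeasurable)
      (C := Bf * C2 + C1 * Bg) ?_
    intro t ht
    have h1 := hfv_abs t ⟨ht.1.le, ht.2⟩ j
    have h2 := hηs_abs t ⟨ht.1.le, ht.2⟩ i
    have h3 := hη_abs t ⟨ht.1.le, ht.2⟩ j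
    have h4 := hgv_abs t ⟨ht.1.le, ht.2⟩ i
    calc |fv t j * ηs s t i + η s t j * gv t i|
        ≤ |fv t j * ηs s t i| + |η s t j * gv t i| := abs_add_le _ _
      _ ≤ Bf * C2 + C1 * Bg := by
          rw [abs_mul, abs_mul]
          exact add_le_add (mul_le_mul h1 h2 (abs_nonneg _) hBf0)
            (mul_le_mul h3 h4 (abs_nonneg _) hC10)
  have dot_expand : ∀ (v w : Fin (d+d) → ℝ),
      (Jmat d).mulVec v ⬝ᵥ w = ∑ i, ∑ j, Jmat d i j * v j * w i := by
    intro v w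
    simp only [dotProduct, Matrix.mulVec, Finset.sum_mul]
  have integrand_eq : ∀ t, ((Jmat d).mulVec (fv t) ⬝ᵥ ηs s t + (Jmat d).mulVec (η s t) ⬝ᵥ gv t)
      = ∑ i, ∑ j, Jmat d i j * (fv t j * ηs s t i + η s t j * gv t i) := by
    intro t
    rw [dot_expand, dot_expand, ← Finset.sum_add_distrib]
    refine Finset.sum_congr rfl fun i _ => ?_
    rw [← Finset.sum_add_distrib]
    exact Finset.sum_congr rfl fun j _ => by ring
  have step : ∀ i, (∫ t in Ioc (0:ℝ) 1, ∑ j, Jmat d i j * (fv t j * ηs s t i + η s t j * gv t i))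
      = ∑ j, Jmat d i j * (η s 1 j * ηs s 1 i - η s 0 j * ηs s 0 i) := by
    intro i
    rw [integral_finset_sum _ (fun j _ => (int_ij i j).const_mul _)]
    exact Finset.sum_congr rfl fun j _ => by rw [integral_const_mul, ibpji i j]
  have sum_eq : (∫ t in Ioc (0:ℝ) 1,
        ((Jmat d).mulVec (fv t) ⬝ᵥ ηs s t + (Jmat d).mulVec (η s t) ⬝ᵥ gv t))
      = (Jmat d).mulVec (η s 1) ⬝ᵥ ηs s 1 - (Jmat d).mulVec (η s 0) ⬝ᵥ ηs s 0 := by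
    calc (∫ t in Ioc (0:ℝ) 1,
          ((Jmat d).mulVec (fv t) ⬝ᵥ ηs s t + (Jmat d).mulVec (η s t) ⬝ᵥ gv t))
        = ∫ t in Ioc (0:ℝ) 1,
            ∑ i, ∑ j, Jmat d i j * (fv t j * ηs s t i + η s t j * gv t i) :=
          integral_congr_ae (Filter.Eventually.of_forall fun t => integrand_eq t)
      _ = ∑ i, ∫ t in Ioc (0:ℝ) 1,
            ∑ j, Jmat d i j * (fv t j * ηs s t i + η s t j * gv t i) :=
          integral_finset_sum _ (fun i _ =>
            integrable_finset_sum _ fun j _ => (int_ij i j).const_mul _)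
      _ = ∑ i, ∑ j, Jmat d i j * (η s 1 j * ηs s 1 i - η s 0 j * ηs s 0 i) :=
          Finset.sum_congr rfl fun i _ => step i
      _ = (Jmat d).mulVec (η s 1) ⬝ᵥ ηs s 1 - (Jmat d).mulVec (η s 0) ⬝ᵥ ηs s 0 := by
          rw [dot_expand, dot_expand, ← Finset.sum_sub_distrib]
          refine Finset.sum_congr rfl fun i _ => ?_
          rw [← Finset.sum_sub_distrib]
          exact Finset.sum_congr rfl fun j _ => by ring
  set wv : ℝ → Fin m → ℝ := fun t => (Z t)ᵀ.mulVec ((Jmat d).mulVec (η s t)) with hwv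
  have pointwise : ∀ t, ((Jmat d).mulVec (fv t) ⬝ᵥ ηs s t + (Jmat d).mulVec (η s t) ⬝ᵥ gv t)
      = wv t ⬝ᵥ wv t := by
    intro t
    simp only [hfv, hgv, hwv]
    exact JF_pointwise_key (Z t) s (η s t) (ηs s t)
  -- the boundary term at `t = 0` vanishes
  have hηs0 : ∀ i : Fin d, ηs s 0 (finSumFinEquiv (Sum.inr i)) = 0 := by
    intro i
    have h1 : HasDerivAt (fun u : ℝ => η u 0 (finSumFinEquiv (Sum.inr i)))
        (ηs s 0 (finSumFinEquiv (Sum.inr i))) s := by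
      have := ((ContinuousLinearMap.proj (R := ℝ) (φ := fun _ : Fin (d+d) => ℝ)
        (finSumFinEquiv (Sum.inr i))).hasFDerivAt).comp_hasDerivAt s (hηderiv s 0)
      exact this
    have h2 : (fun u : ℝ => η u 0 (finSumFinEquiv (Sum.inr i))) = fun _ => (0:ℝ) :=
      funext fun u => hq0 u i
    rw [h2] at h1
    exact h1.unique (hasDerivAt_const s 0)
  have boundary0 : (Jmat d).mulVec (η s 0) ⬝ᵥ ηs s 0 = 0 := by
    rw [dotProduct, ← Equiv.sum_comp finSumFinEquiv, Fintype.sum_sum_type]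
    rw [Finset.sum_eq_zero (fun i _ => by rw [JF_Jmat_mulVec_inl, hq0 s i]; ring),
      Finset.sum_eq_zero (fun i _ => by rw [hηs0 i]; ring), add_zero]
  have hzero : (∫ t in Ioc (0:ℝ) 1, wv t ⬝ᵥ wv t) = 0 := by
    calc (∫ t in Ioc (0:ℝ) 1, wv t ⬝ᵥ wv t)
        = ∫ t in Ioc (0:ℝ) 1,
            ((Jmat d).mulVec (fv t) ⬝ᵥ ηs s t + (Jmat d).mulVec (η s t) ⬝ᵥ gv t) :=
          integral_congr_ae (Filter.Eventually.of_forall fun t => (pointwise t).symm)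
      _ = (Jmat d).mulVec (η s 1) ⬝ᵥ ηs s 1 - (Jmat d).mulVec (η s 0) ⬝ᵥ ηs s 0 := sum_eq
      _ = 0 := by rw [h0, boundary0, sub_zero]
  have hwint : Integrable (fun t => wv t ⬝ᵥ wv t) (volume.restrict (Ioc (0:ℝ) 1)) := by
    refine Integrable.congr ?_ (Filter.Eventually.of_forall pointwise)
    refine Integrable.congr ?_ (Filter.Eventually.of_forall fun t => (integrand_eq t).symm)
    exact integrable_finset_sum _ fun i _ =>
      integrable_finset_sum _ fun j _ => (int_ij i j).const_mul _
  have hnn : ∀ t, (0:ℝ) ≤ wv t ⬝ᵥ wv t := fun t => by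
    rw [dotProduct]
    exact Finset.sum_nonneg fun i _ => mul_self_nonneg _
  have haez : (fun t => wv t ⬝ᵥ wv t) =ᵐ[volume.restrict (Ioc (0:ℝ) 1)] 0 :=
    (integral_eq_zero_iff_of_nonneg_ae (Filter.Eventually.of_forall hnn) hwint).1 hzero
  have hw0 : ∀ᵐ t ∂(volume.restrict (Ioc (0:ℝ) 1)), wv t = 0 := by
    filter_upwards [haez] with t htz
    exact dotProduct_self_eq_zero.mp (by simpa using htz)
  have hfv0 : ∀ᵐ t ∂(volume.restrict (Ioc (0:ℝ) 1)), fv t = 0 := by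
    filter_upwards [hw0] with t htw
    have hfac : fv t = s • (Z t).mulVec (wv t) := by
      simp only [hfv, hwv]
      congr 1
      rw [Matrix.mulVec_mulVec, Matrix.mulVec_mulVec, Matrix.mul_assoc]
    rw [hfac, htw, Matrix.mulVec_zero, smul_zero]
  have ηconst : ∀ t ∈ Icc (0:ℝ) 1, η s t = η s 0 := by
    intro t ht
    funext j
    rw [compF j t ht]
    have hz : (∫ τ in Ioc (0:ℝ) t, fv τ j) = 0 := by
      apply integral_eq_zero_of_ae
      have hs2 := ae_restrict_of_ae_restrict_of_subset (Ioc_subset_Ioc le_rfl ht.2) hfv0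
      filter_upwards [hs2] with τ hτ using by simp [hτ]
    rw [hz, add_zero]
  -- reduction to the invertibility of `Γ₁`
  set p : Fin d → ℝ := fun i => η s 0 (finSumFinEquiv (Sum.inl i)) with hp_def
  have hwX : ∀ t ∈ Icc (0:ℝ) 1, wv t = (Xblock Z t)ᵀ.mulVec p := by
    intro t ht
    funext j
    calc wv t j = ∑ a, Z t a j * ((Jmat d).mulVec (η s t)) a := by
          simp only [hwv]
          rw [JF_mulVec_apply]
          exact Finset.sum_congr rfl fun a _ => by rw [Matrix.transpose_apply]
      _ = ∑ x : Fin d ⊕ Fin d, Z t (finSumFinEquiv x) j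
            * ((Jmat d).mulVec (η s t)) (finSumFinEquiv x) :=
          (Equiv.sum_comp finSumFinEquiv _).symm
      _ = ∑ i : Fin d, Z t (finSumFinEquiv (Sum.inr i)) j * p i := by
          rw [Fintype.sum_sum_type]
          rw [Finset.sum_eq_zero (fun i _ => by
            rw [JF_Jmat_mulVec_inl, ηconst t ht, hq0 s i]; ring), zero_add]
          exact Finset.sum_congr rfl fun i _ => by
            rw [JF_Jmat_mulVec_inr, ηconst t ht]
      _ = ((Xblock Z t)ᵀ.mulVec p) j := by
          rw [JF_mulVec_apply]
          exact Finset.sum_congr rfl fun i _ => by rw [Matrix.transpose_apply]; rfl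
  have hXp : ∀ᵐ t ∂(volume.restrict (Icc (0:ℝ) 1)), (Xblock Z t)ᵀ.mulVec p = 0 := by
    rw [← Measure.restrict_congr_set Ioc_ae_eq_Icc]
    filter_upwards [hw0, ae_restrict_mem measurableSet_Ioc] with t htw htm
    rw [← hwX t ⟨htm.1.le, htm.2⟩]
    exact htw
  have XXmeas : ∀ i j : Fin d, Measurable fun t => (Xblock Z t * (Xblock Z t)ᵀ) i j := by
    intro i j
    simp only [Matrix.mul_apply, Matrix.transpose_apply, Xblock, Matrix.of_apply]
    exact Finset.measurable_sum _ fun l _ => (hZmeas _ l).mul (hZmeas _ l)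
  have XXbdd : ∀ t ∈ Icc (0:ℝ) 1, ∀ i j : Fin d,
      |(Xblock Z t * (Xblock Z t)ᵀ) i j| ≤ m * C^2 := by
    intro t ht i j
    simp only [Matrix.mul_apply, Matrix.transpose_apply, Xblock, Matrix.of_apply]
    calc |∑ l, Z t (finSumFinEquiv (Sum.inr i)) l * Z t (finSumFinEquiv (Sum.inr j)) l|
        ≤ ∑ l, |Z t (finSumFinEquiv (Sum.inr i)) l * Z t (finSumFinEquiv (Sum.inr j)) l| :=
          Finset.abs_sum_le_sum_abs _ _
      _ ≤ ∑ _l : Fin m, C * C := by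
          refine Finset.sum_le_sum fun l _ => ?_
          rw [abs_mul]
          exact mul_le_mul (hC t ht _ l) (hC t ht _ l) (abs_nonneg _) hC0
      _ = m * C^2 := by
          rw [Finset.sum_const, Finset.card_univ, Fintype.card_fin, nsmul_eq_mul]; ring
  have hΓp : (mSetIntegral (Set.Icc (0:ℝ) 1)
      (fun t => Xblock Z t * (Xblock Z t)ᵀ)).mulVec p = 0 := by
    funext i
    simp only [Pi.zero_apply]
    rw [JF_mulVec_apply]
    simp only [mSetIntegral, Matrix.of_apply]
    have int_j : ∀ j : Fin d,
        IntegrableOn (fun t => (Xblock Z t * (Xblock Z t)ᵀ) i j * p j) (Icc (0:ℝ) 1) := by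
      intro j
      refine JF_integrableOn_bdd measurableSet_Icc measure_Icc_lt_top
        (((XXmeas i j).mul measurable_const).aestronglyMeasurable)
        (C := m * C^2 * |p j|) ?_
      intro t ht
      rw [abs_mul]
      exact mul_le_mul_of_nonneg_right (XXbdd t ht i j) (abs_nonneg _)
    have hstep : ∀ j : Fin d, (∫ t in Icc (0:ℝ) 1, (Xblock Z t * (Xblock Z t)ᵀ) i j) * p j
        = ∫ t in Icc (0:ℝ) 1, (Xblock Z t * (Xblock Z t)ᵀ) i j * p j :=
      fun j => (integral_mul_const _ _).symm
    rw [Finset.sum_congr rfl fun j _ => hstep j,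
      ← integral_finset_sum _ (fun j _ => int_j j)]
    apply integral_eq_zero_of_ae
    filter_upwards [hXp] with t htp
    have h5 : ∑ j, (Xblock Z t * (Xblock Z t)ᵀ) i j * p j
        = ((Xblock Z t * (Xblock Z t)ᵀ).mulVec p) i := (JF_mulVec_apply _ _ _).symm
    rw [h5, ← Matrix.mulVec_mulVec, htp, Matrix.mulVec_zero]
    rfl
  have hp : p = 0 := by
    have h1 : (mSetIntegral (Set.Icc (0:ℝ) 1)
        (fun t => Xblock Z t * (Xblock Z t)ᵀ))⁻¹.mulVec
        ((mSetIntegral (Set.Icc (0:ℝ) 1)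
          (fun t => Xblock Z t * (Xblock Z t)ᵀ)).mulVec p) = 0 := by
      rw [hΓp, Matrix.mulVec_zero]
    rw [Matrix.mulVec_mulVec, Matrix.nonsing_inv_mul _ hΓinv, Matrix.one_mulVec] at h1
    exact h1
  rw [ηconst 1 ⟨zero_le_one, le_rfl⟩]
  funext a
  obtain ⟨x, rfl⟩ : ∃ x, finSumFinEquiv x = a := ⟨finSumFinEquiv.symm a,
    Equiv.apply_symm_apply _ a⟩
  cases x with
  | inl i => simpa [hp_def] using congrFun hp i
  | inr i => simpa using hq0 s i

end
end

section
/- Let t ↦ Z_t be a bounded measurable family of 2d×m real matrices on [0,1]. Let (s,t) ↦ ηˢ(t) ∈ ℝ^{2d} be a C¹ family such that for each s the curve t ↦ ηˢ(t) solves η̇ = s·Z_t Z_tᵀ J η and the q-component of ηˢ(0) is zero for every s. Then for every s, ⟨J ηˢ(1), ∂ηˢ/∂s (1)⟩ = ∫₀¹ |Z_tᵀ J ηˢ(t)|² dt. -/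
open MeasureTheory Filter Topology Matrix

noncomputable section

open Set intervalIntegral

namespace JacobiAux

lemma Jmat_apply (d : ℕ) (a b : Fin d ⊕ Fin d) :
    Jmat d (finSumFinEquiv a) (finSumFinEquiv b) = Matrix.fromBlocks 0 (-1) 1 0 a b := by
  simp only [Jmat, Matrix.reindex_apply, Matrix.submatrix_apply, Equiv.symm_apply_apply]

lemma Jmat_abs_le (d : ℕ) (i j : Fin (d + d)) : |Jmat d i j| ≤ 1 := by
  have h1 : i = finSumFinEquiv (finSumFinEquiv.symm i) := (Equiv.apply_symm_apply _ _).symm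
  have h2 : j = finSumFinEquiv (finSumFinEquiv.symm j) := (Equiv.apply_symm_apply _ _).symm
  rw [h1, h2, Jmat_apply]
  rcases finSumFinEquiv.symm i with a | a <;> rcases finSumFinEquiv.symm j with b | b <;>
    simp [Matrix.one_apply] <;> split_ifs <;> norm_num

lemma Jmat_transpose (d : ℕ) : (Jmat d)ᵀ = -(Jmat d) := by
  ext i j
  have h1 : i = finSumFinEquiv (finSumFinEquiv.symm i) := (Equiv.apply_symm_apply _ _).symm
  have h2 : j = finSumFinEquiv (finSumFinEquiv.symm j) := (Equiv.apply_symm_apply _ _).symm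
  rw [Matrix.transpose_apply, Matrix.neg_apply, h1, h2, Jmat_apply, Jmat_apply]
  rcases finSumFinEquiv.symm i with a | a <;> rcases finSumFinEquiv.symm j with b | b <;>
    simp [Matrix.one_apply, eq_comm]

lemma Jmat_mulVec_inl (d : ℕ) (v : Fin (d + d) → ℝ) (i : Fin d) :
    ((Jmat d).mulVec v) (finSumFinEquiv (Sum.inl i)) = -(v (finSumFinEquiv (Sum.inr i))) := by
  simp only [Matrix.mulVec, dotProduct]
  rw [← Equiv.sum_comp finSumFinEquiv
    (fun l => Jmat d (finSumFinEquiv (Sum.inl i)) l * v l), Fintype.sum_sum_type]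
  simp only [Jmat_apply, Matrix.fromBlocks_apply₁₁, Matrix.fromBlocks_apply₁₂,
    Matrix.zero_apply, Matrix.neg_apply, Matrix.one_apply, zero_mul, Finset.sum_const_zero,
    zero_add, neg_mul, ite_mul, one_mul, Finset.sum_neg_distrib, Finset.sum_ite_eq,
    Finset.mem_univ, if_true]

lemma Jmat_mulVec_inr (d : ℕ) (v : Fin (d + d) → ℝ) (i : Fin d) :
    ((Jmat d).mulVec v) (finSumFinEquiv (Sum.inr i)) = v (finSumFinEquiv (Sum.inl i)) := by
  simp only [Matrix.mulVec, dotProduct]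
  rw [← Equiv.sum_comp finSumFinEquiv
    (fun l => Jmat d (finSumFinEquiv (Sum.inr i)) l * v l), Fintype.sum_sum_type]
  simp only [Jmat_apply, Matrix.fromBlocks_apply₂₁, Matrix.fromBlocks_apply₂₂,
    Matrix.zero_apply, Matrix.one_apply, zero_mul, Finset.sum_const_zero,
    add_zero, ite_mul, one_mul, Finset.sum_ite_eq, Finset.mem_univ, if_true]

lemma dot_flip (d : ℕ) (v w : Fin (d + d) → ℝ) :
    ((Jmat d).mulVec v) ⬝ᵥ w = -(v ⬝ᵥ ((Jmat d).mulVec w)) := by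
  have h : v ᵥ* Jmat d = -((Jmat d).mulVec v) := by
    have := Matrix.vecMul_transpose (Jmat d) v
    rw [Jmat_transpose, Matrix.vecMul_neg] at this
    linear_combination (norm := module) -this
  rw [Matrix.dotProduct_mulVec, h, neg_dotProduct, neg_neg]

lemma dot_shift {p q : ℕ} (Z : Matrix (Fin p) (Fin q) ℝ) (v : Fin p → ℝ) (w : Fin q → ℝ) :
    (Zᵀ.mulVec v) ⬝ᵥ w = v ⬝ᵥ (Z.mulVec w) := by
  rw [dotProduct_comm, Matrix.dotProduct_mulVec, ← Matrix.mulVec_transpose,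
    Matrix.transpose_transpose, dotProduct_comm]
lemma abs_mulVec_le {p q : ℕ} {M : Matrix (Fin p) (Fin q) ℝ} {v : Fin q → ℝ} {CM Cv : ℝ}
    (hM : ∀ i j, |M i j| ≤ CM) (hv : ∀ j, |v j| ≤ Cv) (hCv : 0 ≤ Cv) (i : Fin p) :
    |(M.mulVec v) i| ≤ q * (CM * Cv) := by
  have : |(M.mulVec v) i| ≤ ∑ j : Fin q, |M i j * v j| := by
    simpa [Matrix.mulVec, dotProduct] using
      Finset.abs_sum_le_sum_abs (fun j => M i j * v j) Finset.univ
  refine this.trans ?_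
  have hle : ∀ j : Fin q, |M i j * v j| ≤ CM * Cv := fun j => by
    rw [abs_mul]
    exact mul_le_mul (hM i j) (hv j) (abs_nonneg _) ((abs_nonneg _).trans (hM i j))
  calc ∑ j : Fin q, |M i j * v j| ≤ ∑ _j : Fin q, CM * Cv :=
        Finset.sum_le_sum fun j _ => hle j
    _ = q * (CM * Cv) := by simp [mul_comm]

lemma abs_dotProduct_le {q : ℕ} {v w : Fin q → ℝ} {Cv Cw : ℝ}
    (hv : ∀ i, |v i| ≤ Cv) (hw : ∀ i, |w i| ≤ Cw) (hCw : 0 ≤ Cw) :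
    |v ⬝ᵥ w| ≤ q * (Cv * Cw) := by
  have : |v ⬝ᵥ w| ≤ ∑ j : Fin q, |v j * w j| := by
    simpa [dotProduct] using Finset.abs_sum_le_sum_abs (fun j => v j * w j) Finset.univ
  refine this.trans ?_
  have hle : ∀ j : Fin q, |v j * w j| ≤ Cv * Cw := fun j => by
    rw [abs_mul]
    exact mul_le_mul (hv j) (hw j) (abs_nonneg _) ((abs_nonneg _).trans (hv j))
  calc ∑ j : Fin q, |v j * w j| ≤ ∑ _j : Fin q, Cv * Cw := Finset.sum_le_sum fun j _ => hle j
    _ = q * (Cv * Cw) := by simp [mul_comm]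

lemma integrableOn_Icc_of_bdd {h : ℝ → ℝ} {C : ℝ}
    (hm : AEStronglyMeasurable h (volume.restrict (Set.Icc (0:ℝ) 1)))
    (hb : ∀ t ∈ Set.Icc (0:ℝ) 1, |h t| ≤ C) :
    MeasureTheory.IntegrableOn h (Set.Icc (0:ℝ) 1) := by
  refine ⟨hm, HasFiniteIntegral.of_bounded (C := C) ?_⟩
  filter_upwards [ae_restrict_mem measurableSet_Icc] with t ht
  simpa [Real.norm_eq_abs] using hb t ht

lemma II01 {h : ℝ → ℝ} {C : ℝ}
    (hm : AEStronglyMeasurable h (volume.restrict (Set.Icc (0:ℝ) 1)))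
    (hb : ∀ t ∈ Set.Icc (0:ℝ) 1, |h t| ≤ C) {t : ℝ} (ht : t ∈ Set.Icc (0:ℝ) 1) :
    IntervalIntegrable h volume 0 t := by
  have h1 : MeasureTheory.IntegrableOn h (Set.Icc (0:ℝ) 1) := integrableOn_Icc_of_bdd hm hb
  have h2 : MeasureTheory.IntegrableOn h (Set.uIcc (0:ℝ) t) := by
    refine h1.mono_set ?_
    rw [Set.uIcc_of_le ht.1]
    exact Set.Icc_subset_Icc le_rfl ht.2
  exact h2.intervalIntegrable

lemma pointwise_algebra {d m : ℕ} (Zt : Matrix (Fin (d + d)) (Fin m) ℝ) (s u : ℝ)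
    (x y : Fin (d + d) → ℝ) :
    ((Jmat d).mulVec (s • ((Zt * Ztᵀ * Jmat d).mulVec x))) ⬝ᵥ y
      + ((Jmat d).mulVec x) ⬝ᵥ (u • ((Zt * Ztᵀ * Jmat d).mulVec y))
    = (u - s) * ((Ztᵀ.mulVec ((Jmat d).mulVec x)) ⬝ᵥ (Ztᵀ.mulVec ((Jmat d).mulVec y))) := by
  have hA : ∀ v : Fin (d + d) → ℝ,
      (Zt * Ztᵀ * Jmat d).mulVec v = Zt.mulVec (Ztᵀ.mulVec ((Jmat d).mulVec v)) := by
    intro v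
    rw [Matrix.mulVec_mulVec, Matrix.mulVec_mulVec]
  set a := (Jmat d).mulVec x with ha
  set b := (Jmat d).mulVec y with hb
  have hT : (Ztᵀ.mulVec a) ⬝ᵥ (Ztᵀ.mulVec b) = a ⬝ᵥ (Zt.mulVec (Ztᵀ.mulVec b)) :=
    dot_shift Zt a (Ztᵀ.mulVec b)
  have h2 : ((Jmat d).mulVec x) ⬝ᵥ (u • ((Zt * Ztᵀ * Jmat d).mulVec y))
      = u * (a ⬝ᵥ (Zt.mulVec (Ztᵀ.mulVec b))) := by
    rw [dotProduct_smul, hA, ← ha, ← hb]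
    simp [smul_eq_mul]
  have h1 : ((Jmat d).mulVec (s • ((Zt * Ztᵀ * Jmat d).mulVec x))) ⬝ᵥ y
      = -(s * (a ⬝ᵥ (Zt.mulVec (Ztᵀ.mulVec b)))) := by
    rw [Matrix.mulVec_smul, smul_dotProduct, smul_eq_mul, hA]
    have hflip : ((Jmat d).mulVec (Zt.mulVec (Ztᵀ.mulVec a))) ⬝ᵥ y
        = -((Zt.mulVec (Ztᵀ.mulVec a)) ⬝ᵥ b) := by
      rw [dot_flip, hb]
    have hZZ : (Zt.mulVec (Ztᵀ.mulVec a)) ⬝ᵥ b = (Ztᵀ.mulVec a) ⬝ᵥ (Ztᵀ.mulVec b) := by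
      have := dot_shift Ztᵀ (Ztᵀ.mulVec a) b
      rw [Matrix.transpose_transpose] at this
      exact this
    rw [← ha, hflip, hZZ, hT]
    ring
  rw [h1, h2, hT]
  ring

lemma scalar_fubini (a b : ℝ → ℝ) (C : ℝ)
    (ham : Measurable a) (hbm : Measurable b)
    (hA : ∀ t ∈ Set.Icc (0:ℝ) 1, |a t| ≤ C) (hB : ∀ t ∈ Set.Icc (0:ℝ) 1, |b t| ≤ C) :
    (∫ t in (0:ℝ)..1, a t) * (∫ t in (0:ℝ)..1, b t)
      = ∫ t in (0:ℝ)..1,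
          ((a t) * (∫ τ in (0:ℝ)..t, b τ) + (∫ τ in (0:ℝ)..t, a τ) * (b t)) := by
  have h01 : (0:ℝ) ≤ 1 := zero_le_one
  have hC0 : 0 ≤ C := (abs_nonneg _).trans (hA 0 ⟨le_rfl, h01⟩)
  have haI : MeasureTheory.IntegrableOn a (Set.Icc (0:ℝ) 1) :=
    integrableOn_Icc_of_bdd ham.aestronglyMeasurable hA
  have hbI : MeasureTheory.IntegrableOn b (Set.Icc (0:ℝ) 1) :=
    integrableOn_Icc_of_bdd hbm.aestronglyMeasurable hB
  set S : Set ℝ := Set.Ioc (0:ℝ) 1 with hS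
  have hSsub : S ⊆ Set.Icc (0:ℝ) 1 := Set.Ioc_subset_Icc_self
  -- primitive bounds
  have hBp : ∀ t ∈ Set.Icc (0:ℝ) 1, |∫ τ in Set.Ioc (0:ℝ) t, b τ| ≤ C := by
    intro t ht
    rw [← intervalIntegral.integral_of_le ht.1]
    have hbound : ∀ x ∈ Set.uIoc (0:ℝ) t, ‖b x‖ ≤ C := by
      intro x hx
      rw [Set.uIoc_of_le ht.1] at hx
      simpa [Real.norm_eq_abs] using hB x ⟨hx.1.le, hx.2.trans ht.2⟩
    have hni := intervalIntegral.norm_integral_le_of_norm_le_const hbound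
    rw [Real.norm_eq_abs] at hni
    refine hni.trans ?_
    have habs : |t - 0| ≤ 1 := by rw [sub_zero, abs_of_nonneg ht.1]; exact ht.2
    nlinarith [abs_nonneg (t - 0)]
  have hAp : ∀ t ∈ Set.Icc (0:ℝ) 1, |∫ τ in Set.Ioc (0:ℝ) t, a τ| ≤ C := by
    intro t ht
    rw [← intervalIntegral.integral_of_le ht.1]
    have hbound : ∀ x ∈ Set.uIoc (0:ℝ) t, ‖a x‖ ≤ C := by
      intro x hx
      rw [Set.uIoc_of_le ht.1] at hx
      simpa [Real.norm_eq_abs] using hA x ⟨hx.1.le, hx.2.trans ht.2⟩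
    have hni := intervalIntegral.norm_integral_le_of_norm_le_const hbound
    rw [Real.norm_eq_abs] at hni
    refine hni.trans ?_
    have habs : |t - 0| ≤ 1 := by rw [sub_zero, abs_of_nonneg ht.1]; exact ht.2
    nlinarith [abs_nonneg (t - 0)]
  have hBt : ∀ t ∈ Set.Icc (0:ℝ) 1, |∫ τ in Set.Ioc t 1, b τ| ≤ C := by
    intro t ht
    rw [← intervalIntegral.integral_of_le ht.2]
    have hbound : ∀ x ∈ Set.uIoc t 1, ‖b x‖ ≤ C := by
      intro x hx
      rw [Set.uIoc_of_le ht.2] at hx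
      simpa [Real.norm_eq_abs] using hB x ⟨ht.1.trans hx.1.le, hx.2⟩
    have hni := intervalIntegral.norm_integral_le_of_norm_le_const hbound
    rw [Real.norm_eq_abs] at hni
    refine hni.trans ?_
    have habs : |1 - t| ≤ 1 := by
      rw [abs_of_nonneg (by linarith [ht.2] : (0:ℝ) ≤ 1 - t)]; linarith [ht.1]
    nlinarith [abs_nonneg (1 - t)]
  -- measurability of primitives
  have hBpm : AEStronglyMeasurable (fun t => ∫ τ in Set.Ioc (0:ℝ) t, b τ) (volume.restrict S) :=
    ((intervalIntegral.continuousOn_primitive hbI).aestronglyMeasurable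
      measurableSet_Icc).mono_measure (Measure.restrict_mono hSsub le_rfl)
  have hApm : AEStronglyMeasurable (fun t => ∫ τ in Set.Ioc (0:ℝ) t, a τ) (volume.restrict S) :=
    ((intervalIntegral.continuousOn_primitive haI).aestronglyMeasurable
      measurableSet_Icc).mono_measure (Measure.restrict_mono hSsub le_rfl)
  -- splitting
  have hsplit : ∀ t ∈ Set.Icc (0:ℝ) 1,
      (∫ τ in Set.Ioc (0:ℝ) t, b τ) + (∫ τ in Set.Ioc t 1, b τ) = ∫ τ in S, b τ := by
    intro t ht
    rw [← MeasureTheory.setIntegral_union (Set.Ioc_disjoint_Ioc_of_le le_rfl) measurableSet_Ioc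
      (hbI.mono_set fun x hx => ⟨hx.1.le, hx.2.trans ht.2⟩)
      (hbI.mono_set fun x hx => ⟨ht.1.trans hx.1.le, hx.2⟩),
      Set.Ioc_union_Ioc_eq_Ioc ht.1 ht.2]
  have hBtm : AEStronglyMeasurable (fun t => ∫ τ in Set.Ioc t 1, b τ) (volume.restrict S) := by
    have hsub : AEStronglyMeasurable
        (fun t => (∫ τ in S, b τ) - ∫ τ in Set.Ioc (0:ℝ) t, b τ) (volume.restrict S) :=
      aestronglyMeasurable_const.sub hBpm
    refine hsub.congr ?_
    filter_upwards [ae_restrict_mem measurableSet_Ioc] with t ht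
    have := hsplit t (hSsub ht)
    linarith
  -- product integrability helper
  have hprod : ∀ (f g : ℝ → ℝ), AEStronglyMeasurable f (volume.restrict S) →
      AEStronglyMeasurable g (volume.restrict S) →
      (∀ t ∈ Set.Icc (0:ℝ) 1, |f t| ≤ C) → (∀ t ∈ Set.Icc (0:ℝ) 1, |g t| ≤ C) →
      MeasureTheory.IntegrableOn (fun t => f t * g t) S := by
    intro f g hf hg hfb hgb
    refine ⟨hf.mul hg, HasFiniteIntegral.of_bounded (C := C * C) ?_⟩
    filter_upwards [ae_restrict_mem measurableSet_Ioc] with t ht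
    rw [Real.norm_eq_abs, abs_mul]
    exact mul_le_mul (hfb t (hSsub ht)) (hgb t (hSsub ht)) (abs_nonneg _) hC0
  have hab1 : MeasureTheory.IntegrableOn
      (fun t => a t * ∫ τ in Set.Ioc (0:ℝ) t, b τ) S :=
    hprod _ _ ham.aestronglyMeasurable hBpm hA hBp
  have hab2 : MeasureTheory.IntegrableOn
      (fun t => (∫ τ in Set.Ioc (0:ℝ) t, a τ) * b t) S :=
    hprod _ _ hApm hbm.aestronglyMeasurable hAp hB
  have habt : MeasureTheory.IntegrableOn
      (fun t => a t * ∫ τ in Set.Ioc t 1, b τ) S :=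
    hprod _ _ ham.aestronglyMeasurable hBtm hA hBt
  -- Fubini piece
  have hfub : (∫ t in S, a t * ∫ τ in Set.Ioc t 1, b τ)
      = ∫ τ in S, (∫ t in Set.Ioc (0:ℝ) τ, a t) * b τ := by
    set F : ℝ × ℝ → ℝ :=
      fun p => Set.indicator {q : ℝ × ℝ | q.1 < q.2} (fun q => a q.1 * b q.2) p with hF
    have hFmeas : Measurable F :=
      ((ham.comp measurable_fst).mul (hbm.comp measurable_snd)).indicator
        (measurableSet_lt measurable_fst measurable_snd)
    have hprodmeas : (volume.restrict S).prod (volume.restrict S)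
        = (volume.prod volume).restrict (S ×ˢ S) := Measure.prod_restrict S S
    have hFint : MeasureTheory.Integrable F ((volume.restrict S).prod (volume.restrict S)) := by
      refine ⟨hFmeas.aestronglyMeasurable, HasFiniteIntegral.of_bounded (C := C * C) ?_⟩
      have hae : ∀ᵐ p ∂((volume.restrict S).prod (volume.restrict S)), p ∈ S ×ˢ S := by
        rw [hprodmeas]
        exact ae_restrict_mem (measurableSet_Ioc.prod measurableSet_Ioc)
      filter_upwards [hae] with p hp
      have h1 : |a p.1| ≤ C := hA _ (hSsub hp.1)
      have h2 : |b p.2| ≤ C := hB _ (hSsub hp.2)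
      rw [Real.norm_eq_abs]
      refine le_trans ?_ (mul_le_mul h1 h2 (abs_nonneg _) hC0)
      rw [← abs_mul]
      by_cases hc : p ∈ {q : ℝ × ℝ | q.1 < q.2}
      · simp only [hF, Set.indicator_of_mem hc]
        exact le_rfl
      · simp only [hF, Set.indicator_of_notMem hc, abs_zero]
        exact abs_nonneg _
    have hswap := MeasureTheory.integral_integral_swap
      (f := fun t τ => F (t, τ)) (μ := volume.restrict S) (ν := volume.restrict S) hFint
    have hL : (∫ t in S, ∫ τ in S, F (t, τ)) = ∫ t in S, a t * ∫ τ in Set.Ioc t 1, b τ := by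
      refine MeasureTheory.setIntegral_congr_fun measurableSet_Ioc ?_
      intro t ht
      have hind : ∀ τ, F (t, τ) = Set.indicator (Set.Ioi t) (fun τ => a t * b τ) τ := by
        intro τ
        by_cases hc : t < τ <;>
          simp [hF, Set.indicator_apply, Set.mem_setOf_eq, Set.mem_Ioi, hc]
      simp only [hind]
      rw [MeasureTheory.setIntegral_indicator measurableSet_Ioi]
      have hset : S ∩ Set.Ioi t = Set.Ioc t 1 := by
        ext τ
        simp only [Set.mem_inter_iff, Set.mem_Ioc, Set.mem_Ioi, hS]
        exact ⟨fun h => ⟨h.2, h.1.2⟩, fun h => ⟨⟨ht.1.trans h.1, h.2⟩, h.1⟩⟩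
      rw [hset, MeasureTheory.integral_const_mul]
    have hR : (∫ τ in S, ∫ t in S, F (t, τ)) = ∫ τ in S, (∫ t in Set.Ioc (0:ℝ) τ, a t) * b τ := by
      refine MeasureTheory.setIntegral_congr_fun measurableSet_Ioc ?_
      intro τ hτ
      have hind : ∀ t, F (t, τ) = Set.indicator (Set.Iio τ) (fun t => a t * b τ) t := by
        intro t
        by_cases hc : t < τ <;>
          simp [hF, Set.indicator_apply, Set.mem_setOf_eq, Set.mem_Iio, hc]
      simp only [hind]
      rw [MeasureTheory.setIntegral_indicator measurableSet_Iio]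
      have hset : S ∩ Set.Iio τ = Set.Ioo 0 τ := by
        ext t
        simp only [Set.mem_inter_iff, Set.mem_Ioc, Set.mem_Iio, Set.mem_Ioo, hS]
        exact ⟨fun h => ⟨h.1.1, h.2⟩, fun h => ⟨⟨h.1, (h.2.le.trans hτ.2)⟩, h.2⟩⟩
      rw [hset, MeasureTheory.integral_mul_const, ← MeasureTheory.integral_Ioc_eq_integral_Ioo]
    rw [← hL, hswap, hR]
  -- main computation
  rw [intervalIntegral.integral_of_le h01, intervalIntegral.integral_of_le h01,
    intervalIntegral.integral_of_le h01]
  have hcongr : (∫ t in S,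
      ((a t) * (∫ τ in (0:ℝ)..t, b τ) + (∫ τ in (0:ℝ)..t, a τ) * (b t)))
      = ∫ t in S, ((a t) * (∫ τ in Set.Ioc (0:ℝ) t, b τ)
          + (∫ τ in Set.Ioc (0:ℝ) t, a τ) * (b t)) := by
    refine MeasureTheory.setIntegral_congr_fun measurableSet_Ioc ?_
    intro t ht
    simp only [intervalIntegral.integral_of_le ht.1.le]
  rw [hcongr]
  calc (∫ t in S, a t) * (∫ t in S, b t)
      = ∫ t in S, a t * (∫ τ in S, b τ) := by rw [MeasureTheory.integral_mul_const]
    _ = ∫ t in S, (a t * (∫ τ in Set.Ioc (0:ℝ) t, b τ) + a t * (∫ τ in Set.Ioc t 1, b τ)) := by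
        refine MeasureTheory.setIntegral_congr_fun measurableSet_Ioc ?_
        intro t ht
        rw [← hsplit t (hSsub ht)]
        ring
    _ = (∫ t in S, a t * (∫ τ in Set.Ioc (0:ℝ) t, b τ))
        + ∫ t in S, a t * (∫ τ in Set.Ioc t 1, b τ) :=
        MeasureTheory.integral_add hab1 habt
    _ = (∫ t in S, a t * (∫ τ in Set.Ioc (0:ℝ) t, b τ))
        + ∫ t in S, (∫ τ in Set.Ioc (0:ℝ) t, a τ) * b t := by rw [hfub]
    _ = ∫ t in S, (a t * (∫ τ in Set.Ioc (0:ℝ) t, b τ)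
        + (∫ τ in Set.Ioc (0:ℝ) t, a τ) * b t) := (MeasureTheory.integral_add hab1 hab2).symm

lemma primitive_bound {b : ℝ → ℝ} {C : ℝ} (hB : ∀ t ∈ Set.Icc (0:ℝ) 1, |b t| ≤ C) :
    ∀ t ∈ Set.Icc (0:ℝ) 1, |∫ τ in (0:ℝ)..t, b τ| ≤ C := by
  intro t ht
  have hC0 : 0 ≤ C := (abs_nonneg _).trans (hB 0 ⟨le_rfl, zero_le_one⟩)
  have hbound : ∀ x ∈ Set.uIoc (0:ℝ) t, ‖b x‖ ≤ C := by
    intro x hx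
    rw [Set.uIoc_of_le ht.1] at hx
    simpa [Real.norm_eq_abs] using hB x ⟨hx.1.le, hx.2.trans ht.2⟩
  have hni := intervalIntegral.norm_integral_le_of_norm_le_const hbound
  rw [Real.norm_eq_abs] at hni
  refine hni.trans ?_
  have habs : |t - 0| ≤ 1 := by rw [sub_zero, abs_of_nonneg ht.1]; exact ht.2
  nlinarith [abs_nonneg (t - 0)]

lemma primitive_aesm {b : ℝ → ℝ} {C : ℝ} (hbm : Measurable b)
    (hB : ∀ t ∈ Set.Icc (0:ℝ) 1, |b t| ≤ C) :
    AEStronglyMeasurable (fun t => ∫ τ in (0:ℝ)..t, b τ)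
      (volume.restrict (Set.Icc (0:ℝ) 1)) := by
  have hbI : MeasureTheory.IntegrableOn b (Set.Icc (0:ℝ) 1) :=
    integrableOn_Icc_of_bdd hbm.aestronglyMeasurable hB
  have hbu : MeasureTheory.IntegrableOn b (Set.uIcc (0:ℝ) 1) := by
    rw [Set.uIcc_of_le zero_le_one]; exact hbI
  have hc := intervalIntegral.continuousOn_primitive_interval hbu
  rw [Set.uIcc_of_le zero_le_one] at hc
  exact hc.aestronglyMeasurable measurableSet_Icc

lemma pair_identity (a b : ℝ → ℝ) (α β : ℝ) (C : ℝ)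
    (ham : Measurable a) (hbm : Measurable b)
    (hA : ∀ t ∈ Set.Icc (0:ℝ) 1, |a t| ≤ C) (hB : ∀ t ∈ Set.Icc (0:ℝ) 1, |b t| ≤ C) :
    α * (∫ t in (0:ℝ)..1, b t) + (∫ t in (0:ℝ)..1, a t) * β
      + (∫ t in (0:ℝ)..1, a t) * (∫ t in (0:ℝ)..1, b t)
    = ∫ t in (0:ℝ)..1,
        (a t * (β + ∫ τ in (0:ℝ)..t, b τ) + (α + ∫ τ in (0:ℝ)..t, a τ) * b t) := by
  have h01 : (0:ℝ) ≤ 1 := zero_le_one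
  have hC0 : 0 ≤ C := (abs_nonneg _).trans (hA 0 ⟨le_rfl, h01⟩)
  have hmem1 : (1:ℝ) ∈ Set.Icc (0:ℝ) 1 := ⟨h01, le_rfl⟩
  have h1 : IntervalIntegrable (fun t => a t * β + α * b t) volume 0 1 := by
    refine II01 (C := C * |β| + |α| * C)
      ((ham.mul_const β).add (hbm.const_mul α)).aestronglyMeasurable ?_ hmem1
    intro t ht
    calc |a t * β + α * b t| ≤ |a t * β| + |α * b t| := abs_add_le _ _
      _ = |a t| * |β| + |α| * |b t| := by rw [abs_mul, abs_mul]
      _ ≤ C * |β| + |α| * C :=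
          add_le_add (mul_le_mul_of_nonneg_right (hA t ht) (abs_nonneg β))
            (mul_le_mul_of_nonneg_left (hB t ht) (abs_nonneg α))
  have h2 : IntervalIntegrable
      (fun t => a t * (∫ τ in (0:ℝ)..t, b τ) + (∫ τ in (0:ℝ)..t, a τ) * b t) volume 0 1 := by
    refine II01 (C := C * C + C * C)
      ((ham.aestronglyMeasurable.mul (primitive_aesm hbm hB)).add
        ((primitive_aesm ham hA).mul hbm.aestronglyMeasurable)) ?_ hmem1
    intro t ht
    calc |a t * (∫ τ in (0:ℝ)..t, b τ) + (∫ τ in (0:ℝ)..t, a τ) * b t|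
        ≤ |a t * (∫ τ in (0:ℝ)..t, b τ)| + |(∫ τ in (0:ℝ)..t, a τ) * b t| := abs_add_le _ _
      _ = |a t| * |∫ τ in (0:ℝ)..t, b τ| + |∫ τ in (0:ℝ)..t, a τ| * |b t| := by
          rw [abs_mul, abs_mul]
      _ ≤ C * C + C * C :=
          add_le_add (mul_le_mul (hA t ht) (primitive_bound hB t ht) (abs_nonneg _) hC0)
            (mul_le_mul (primitive_bound hA t ht) (hB t ht) (abs_nonneg _) hC0)
  have hsplit : (fun t => a t * (β + ∫ τ in (0:ℝ)..t, b τ) + (α + ∫ τ in (0:ℝ)..t, a τ) * b t)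
      = fun t => (a t * β + α * b t)
        + (a t * (∫ τ in (0:ℝ)..t, b τ) + (∫ τ in (0:ℝ)..t, a τ) * b t) := by
    funext t; ring
  rw [hsplit, intervalIntegral.integral_add h1 h2]
  have h1a : IntervalIntegrable (fun t => a t * β) volume 0 1 := by
    refine II01 (C := C * |β|) ((ham.mul_const β)).aestronglyMeasurable ?_ hmem1
    intro t ht
    rw [abs_mul]
    exact mul_le_mul_of_nonneg_right (hA t ht) (abs_nonneg β)
  have h1b : IntervalIntegrable (fun t => α * b t) volume 0 1 := by
    refine II01 (C := |α| * C) ((hbm.const_mul α)).aestronglyMeasurable ?_ hmem1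
    intro t ht
    rw [abs_mul]
    exact mul_le_mul_of_nonneg_left (hB t ht) (abs_nonneg α)
  rw [intervalIntegral.integral_add h1a h1b, intervalIntegral.integral_mul_const,
    intervalIntegral.integral_const_mul,
    ← scalar_fubini a b C ham hbm hA hB]
  ring

lemma II_sum' {n : ℕ} (g : Fin n → ℝ → ℝ) (μ : Measure ℝ) (a b : ℝ)
    (h : ∀ j, IntervalIntegrable (g j) μ a b) :
    IntervalIntegrable (fun t => ∑ j : Fin n, g j t) μ a b := by
  have h2 := IntervalIntegrable.sum (μ := μ) (a := a) (b := b) Finset.univ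
    (f := g) (fun j _ => h j)
  have heq : (∑ j ∈ Finset.univ, g j) = fun t => ∑ j : Fin n, g j t := by
    funext t; simp
  rwa [heq] at h2

lemma push_sum {n : ℕ} (h : Fin n → Fin n → ℝ → ℝ)
    (hint : ∀ i j, IntervalIntegrable (h i j) volume 0 1) (c : Fin n → Fin n → ℝ) :
    (∫ t in (0:ℝ)..1, ∑ i : Fin n, ∑ j : Fin n, c i j * h i j t)
      = ∑ i : Fin n, ∑ j : Fin n, c i j * ∫ t in (0:ℝ)..1, h i j t := by
  have hin : ∀ i : Fin n, IntervalIntegrable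
      (fun t => ∑ j : Fin n, c i j * h i j t) volume 0 1 := fun i =>
    II_sum' (fun j t => c i j * h i j t) _ _ _ (fun j => (hint i j).const_mul (c i j))
  refine (intervalIntegral.integral_finset_sum
    (f := fun i t => ∑ j : Fin n, c i j * h i j t) (fun i _ => hin i)).trans ?_
  refine Finset.sum_congr rfl fun i _ => ?_
  refine (intervalIntegral.integral_finset_sum
    (f := fun j t => c i j * h i j t) (fun j _ => (hint i j).const_mul (c i j))).trans ?_
  exact Finset.sum_congr rfl fun j _ => intervalIntegral.integral_const_mul _ _

set_option maxHeartbeats 1600000 in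
lemma bilin_expand {n : ℕ} (hn : 0 < n) (M : Matrix (Fin n) (Fin n) ℝ) (av bv : Fin n → ℝ)
    (f g : ℝ → Fin n → ℝ) (C : ℝ)
    (hfm : ∀ i, Measurable fun t => f t i) (hgm : ∀ i, Measurable fun t => g t i)
    (hfb : ∀ t ∈ Set.Icc (0:ℝ) 1, ∀ i, |f t i| ≤ C)
    (hgb : ∀ t ∈ Set.Icc (0:ℝ) 1, ∀ i, |g t i| ≤ C) :
    (M.mulVec (av + ∫ t in (0:ℝ)..1, f t)) ⬝ᵥ (bv + ∫ t in (0:ℝ)..1, g t)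
      = (M.mulVec av) ⬝ᵥ bv + ∫ t in (0:ℝ)..1,
          ((M.mulVec (f t)) ⬝ᵥ (bv + ∫ τ in (0:ℝ)..t, g τ)
            + (M.mulVec (av + ∫ τ in (0:ℝ)..t, f τ)) ⬝ᵥ (g t)) := by
  have h01 : (0:ℝ) ≤ 1 := zero_le_one
  have hmem1 : (1:ℝ) ∈ Set.Icc (0:ℝ) 1 := ⟨h01, le_rfl⟩
  have hC0 : 0 ≤ C := (abs_nonneg _).trans (hfb 0 ⟨le_rfl, h01⟩ ⟨0, hn⟩)
  -- vector-valued integrability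
  have hfPiInt : MeasureTheory.IntegrableOn f (Set.Icc (0:ℝ) 1) volume := by
    refine ⟨(measurable_pi_iff.2 hfm).aestronglyMeasurable,
      HasFiniteIntegral.of_bounded (C := C) ?_⟩
    filter_upwards [ae_restrict_mem measurableSet_Icc] with t ht
    rw [pi_norm_le_iff_of_nonneg hC0]
    intro i; rw [Real.norm_eq_abs]; exact hfb t ht i
  have hgPiInt : MeasureTheory.IntegrableOn g (Set.Icc (0:ℝ) 1) volume := by
    refine ⟨(measurable_pi_iff.2 hgm).aestronglyMeasurable,
      HasFiniteIntegral.of_bounded (C := C) ?_⟩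
    filter_upwards [ae_restrict_mem measurableSet_Icc] with t ht
    rw [pi_norm_le_iff_of_nonneg hC0]
    intro i; rw [Real.norm_eq_abs]; exact hgb t ht i
  have hfII : ∀ t ∈ Set.Icc (0:ℝ) 1, IntervalIntegrable f volume 0 t := by
    intro t ht
    refine (hfPiInt.mono_set ?_).intervalIntegrable
    rw [Set.uIcc_of_le ht.1]; exact Set.Icc_subset_Icc le_rfl ht.2
  have hgII : ∀ t ∈ Set.Icc (0:ℝ) 1, IntervalIntegrable g volume 0 t := by
    intro t ht
    refine (hgPiInt.mono_set ?_).intervalIntegrable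
    rw [Set.uIcc_of_le ht.1]; exact Set.Icc_subset_Icc le_rfl ht.2
  -- coordinatewise evaluation of vector integrals
  have hfeval : ∀ t ∈ Set.Icc (0:ℝ) 1,
      (∫ τ in (0:ℝ)..t, f τ) = fun i => ∫ τ in (0:ℝ)..t, f τ i := by
    intro t ht
    funext i
    have := (ContinuousLinearMap.proj (R := ℝ) (φ := fun _ : Fin n => ℝ)
      i).intervalIntegral_comp_comm (hfII t ht)
    simpa using this.symm
  have hgeval : ∀ t ∈ Set.Icc (0:ℝ) 1,
      (∫ τ in (0:ℝ)..t, g τ) = fun i => ∫ τ in (0:ℝ)..t, g τ i := by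
    intro t ht
    funext i
    have := (ContinuousLinearMap.proj (R := ℝ) (φ := fun _ : Fin n => ℝ)
      i).intervalIntegral_comp_comm (hgII t ht)
    simpa using this.symm
  -- replace the inner vector integrals by coordinatewise ones
  have hinner : Set.EqOn
      (fun t => (M.mulVec (f t)) ⬝ᵥ (bv + ∫ τ in (0:ℝ)..t, g τ)
        + (M.mulVec (av + ∫ τ in (0:ℝ)..t, f τ)) ⬝ᵥ (g t))
      (fun t => (M.mulVec (f t)) ⬝ᵥ (bv + fun i => ∫ τ in (0:ℝ)..t, g τ i)
        + (M.mulVec (av + fun i => ∫ τ in (0:ℝ)..t, f τ i)) ⬝ᵥ (g t))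
      (Set.uIcc (0:ℝ) 1) := by
    intro t ht
    rw [Set.uIcc_of_le h01] at ht
    simp only [hfeval t ht, hgeval t ht]
  rw [intervalIntegral.integral_congr hinner, hfeval 1 hmem1, hgeval 1 hmem1]
  -- pointwise pair integrability
  have hIIpair : ∀ (i j : Fin n), IntervalIntegrable
      (fun t => f t j * (bv i + ∫ τ in (0:ℝ)..t, g τ i)
        + (av j + ∫ τ in (0:ℝ)..t, f τ j) * g t i) volume 0 1 := by
    intro i j
    refine II01 (C := C * (|bv i| + C) + (|av j| + C) * C)
      (((hfm j).aestronglyMeasurable.mul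
        (aestronglyMeasurable_const.add (primitive_aesm (hgm i) (fun t ht => hgb t ht i)))).add
       ((aestronglyMeasurable_const.add
          (primitive_aesm (hfm j) (fun t ht => hfb t ht j))).mul
        (hgm i).aestronglyMeasurable)) ?_ hmem1
    intro t ht
    have hb1 : |bv i + ∫ τ in (0:ℝ)..t, g τ i| ≤ |bv i| + C :=
      (abs_add_le _ _).trans (add_le_add le_rfl (primitive_bound (fun τ hτ => hgb τ hτ i) t ht))
    have hb2 : |av j + ∫ τ in (0:ℝ)..t, f τ j| ≤ |av j| + C :=
      (abs_add_le _ _).trans (add_le_add le_rfl (primitive_bound (fun τ hτ => hfb τ hτ j) t ht))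
    calc |f t j * (bv i + ∫ τ in (0:ℝ)..t, g τ i)
          + (av j + ∫ τ in (0:ℝ)..t, f τ j) * g t i|
        ≤ |f t j| * |bv i + ∫ τ in (0:ℝ)..t, g τ i|
          + |av j + ∫ τ in (0:ℝ)..t, f τ j| * |g t i| := by
          refine (abs_add_le _ _).trans ?_
          rw [abs_mul, abs_mul]
      _ ≤ C * (|bv i| + C) + (|av j| + C) * C :=
          add_le_add (mul_le_mul (hfb t ht j) hb1 (abs_nonneg _) hC0)
            (mul_le_mul hb2 (hgb t ht i) (abs_nonneg _) (by positivity))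
  -- unfold to finite sums
  simp only [dotProduct, Matrix.mulVec, Pi.add_apply, Finset.sum_mul, mul_assoc]
  -- push the integral inside the double sums
  have hcollect : (fun t => (∑ i : Fin n, ∑ j : Fin n,
        M i j * (f t j * (bv i + ∫ τ in (0:ℝ)..t, g τ i)))
      + ∑ i : Fin n, ∑ j : Fin n,
        M i j * ((av j + ∫ τ in (0:ℝ)..t, f τ j) * g t i))
    = fun t => ∑ i : Fin n, ∑ j : Fin n,
        M i j * (f t j * (bv i + ∫ τ in (0:ℝ)..t, g τ i)
          + (av j + ∫ τ in (0:ℝ)..t, f τ j) * g t i) := by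
    funext t
    rw [← Finset.sum_add_distrib]
    refine Finset.sum_congr rfl fun i _ => ?_
    rw [← Finset.sum_add_distrib]
    refine Finset.sum_congr rfl fun j _ => ?_
    ring
  rw [hcollect]
  have hpush : (∫ t in (0:ℝ)..1, ∑ i : Fin n, ∑ j : Fin n,
        M i j * (f t j * (bv i + ∫ τ in (0:ℝ)..t, g τ i)
          + (av j + ∫ τ in (0:ℝ)..t, f τ j) * g t i))
      = ∑ i : Fin n, ∑ j : Fin n, M i j * (∫ t in (0:ℝ)..1,
          (f t j * (bv i + ∫ τ in (0:ℝ)..t, g τ i)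
            + (av j + ∫ τ in (0:ℝ)..t, f τ j) * g t i)) :=
    push_sum (fun i j t => f t j * (bv i + ∫ τ in (0:ℝ)..t, g τ i)
        + (av j + ∫ τ in (0:ℝ)..t, f τ j) * g t i)
      (fun i j => hIIpair i j) (fun i j => M i j)
  rw [hpush]
  have hfinal : ∀ i j : Fin n,
      M i j * ((av j + ∫ t in (0:ℝ)..1, f t j) * (bv i + ∫ t in (0:ℝ)..1, g t i))
      = M i j * (av j * bv i) + M i j * (∫ t in (0:ℝ)..1,
          (f t j * (bv i + ∫ τ in (0:ℝ)..t, g τ i)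
            + (av j + ∫ τ in (0:ℝ)..t, f τ j) * g t i)) := by
    intro i j
    rw [← pair_identity (fun t => f t j) (fun t => g t i) (av j) (bv i) C (hfm j) (hgm i)
      (fun t ht => hfb t ht j) (fun t ht => hgb t ht i)]
    ring
  calc ∑ i : Fin n, ∑ j : Fin n,
        M i j * ((av j + ∫ t in (0:ℝ)..1, f t j) * (bv i + ∫ t in (0:ℝ)..1, g t i))
      = ∑ i : Fin n, ∑ j : Fin n, (M i j * (av j * bv i) + M i j * (∫ t in (0:ℝ)..1,
          (f t j * (bv i + ∫ τ in (0:ℝ)..t, g τ i)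
            + (av j + ∫ τ in (0:ℝ)..t, f τ j) * g t i))) :=
        Finset.sum_congr rfl fun i _ => Finset.sum_congr rfl fun j _ => hfinal i j
    _ = (∑ i : Fin n, ∑ j : Fin n, M i j * (av j * bv i))
        + ∑ i : Fin n, ∑ j : Fin n, M i j * (∫ t in (0:ℝ)..1,
          (f t j * (bv i + ∫ τ in (0:ℝ)..t, g τ i)
            + (av j + ∫ τ in (0:ℝ)..t, f τ j) * g t i)) := by
        rw [← Finset.sum_add_distrib]
        refine Finset.sum_congr rfl fun i _ => ?_
        rw [← Finset.sum_add_distrib]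

lemma measurable_mulVec_apply {p q : ℕ} {M : ℝ → Matrix (Fin p) (Fin q) ℝ} {v : ℝ → Fin q → ℝ}
    (hM : ∀ i j, Measurable fun t => M t i j) (hv : ∀ j, Measurable fun t => v t j) (i : Fin p) :
    Measurable fun t => ((M t).mulVec (v t)) i := by
  simp only [Matrix.mulVec, dotProduct]
  exact Finset.measurable_sum _ fun j _ => (hM i j).mul (hv j)

end JacobiAux

/-- (Key identity in the proof of Proposition 6.)  For a C¹ family `ηˢ` of
solutions of `η̇ = s Z_t Z_tᵀ J η` whose `q`-component vanishes at `t = 0`,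
`⟨J ηˢ(1), ∂ηˢ/∂s(1)⟩ = ∫₀¹ |Z_tᵀ J ηˢ(t)|² dt`. -/
theorem jacobi_family_symplectic_identity
    (d m : ℕ) (hd : 0 < d) (hm : 0 < m)
    (Z : ℝ → Matrix (Fin (d + d)) (Fin m) ℝ)
    (hZmeas : ∀ i j, Measurable fun t => Z t i j)
    (hZbdd : ∃ C : ℝ, ∀ t ∈ Set.Icc (0:ℝ) 1, ∀ i j, |Z t i j| ≤ C)
    (η ηs : ℝ → ℝ → Fin (d + d) → ℝ)
    (hηcont : Continuous fun p : ℝ × ℝ => η p.1 p.2)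
    (hηscont : Continuous fun p : ℝ × ℝ => ηs p.1 p.2)
    (hηsol : ∀ s : ℝ, IsScaledJacobiSolution Z s (η s))
    (hηderiv : ∀ (s t : ℝ), HasDerivAt (fun u : ℝ => η u t) (ηs s t) s)
    (hq0 : ∀ (s : ℝ) (i : Fin d), η s 0 (finSumFinEquiv (Sum.inr i)) = 0) :
    ∀ s : ℝ, ((Jmat d).mulVec (η s 1)) ⬝ᵥ ηs s 1 =
      ∫ t in Set.Icc (0:ℝ) 1,
        ((Z t)ᵀ.mulVec ((Jmat d).mulVec (η s t))) ⬝ᵥ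
          ((Z t)ᵀ.mulVec ((Jmat d).mulVec (η s t))) := by
  intro s
  obtain ⟨C, hC⟩ := hZbdd
  have hmem0 : (0:ℝ) ∈ Set.Icc (0:ℝ) 1 := ⟨le_rfl, zero_le_one⟩
  have hmem1 : (1:ℝ) ∈ Set.Icc (0:ℝ) 1 := ⟨zero_le_one, le_rfl⟩
  have hC0 : 0 ≤ C := (abs_nonneg _).trans (hC 0 hmem0 ⟨0, by omega⟩ ⟨0, hm⟩)
  have hηum : ∀ u (i : Fin (d + d)), Measurable fun t => η u t i := fun u i =>
    ((continuous_apply i).comp (hηcont.comp (continuous_const.prodMk continuous_id))).measurable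
  have hηtc : ∀ t, Continuous fun u => η u t := fun t =>
    hηcont.comp (continuous_id.prodMk continuous_const)
  -- measurability of the coordinates of Zᵀ J η u
  have hJm : ∀ u (k : Fin (d + d)), Measurable fun t => ((Jmat d).mulVec (η u t)) k :=
    fun u k => JacobiAux.measurable_mulVec_apply (M := fun _ => Jmat d)
      (fun i j => measurable_const) (hηum u) k
  have hZJm : ∀ u (j : Fin m),
      Measurable fun t => ((Z t)ᵀ.mulVec ((Jmat d).mulVec (η u t))) j := fun u j =>
    JacobiAux.measurable_mulVec_apply (M := fun t => (Z t)ᵀ)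
      (fun i j => by simpa using hZmeas j i) (hJm u) j
  set c : ℝ → ℝ → ℝ := fun u t =>
    ((Z t)ᵀ.mulVec ((Jmat d).mulVec (η s t))) ⬝ᵥ ((Z t)ᵀ.mulVec ((Jmat d).mulVec (η u t)))
    with hc
  set K : ℝ → ℝ := fun u => ∫ t in Set.Icc (0:ℝ) 1, c u t with hK
  have hcm : ∀ u, Measurable fun t => c u t := by
    intro u
    simp only [hc, dotProduct]
    exact Finset.measurable_sum _ fun j _ => (hZJm s j).mul (hZJm u j)
  -- uniform bound near s
  obtain ⟨Mb, hMb⟩ := ((isCompact_Icc (a := s - 1) (b := s + 1)).prod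
    (isCompact_Icc (a := (0:ℝ)) (b := 1))).exists_bound_of_continuousOn hηcont.continuousOn
  have hsmem : s ∈ Set.Icc (s - 1) (s + 1) := ⟨by linarith, by linarith⟩
  have hMb0 : 0 ≤ Mb := (norm_nonneg _).trans (hMb (s, 0) ⟨hsmem, hmem0⟩)
  have hMb' : ∀ u ∈ Set.Icc (s - 1) (s + 1), ∀ t ∈ Set.Icc (0:ℝ) 1, ∀ i, |η u t i| ≤ Mb := by
    intro u hu t ht i
    exact (norm_le_pi_norm (η u t) i).trans (hMb (u, t) ⟨hu, ht⟩)
  set D : ℝ := ((d + d : ℕ) : ℝ) * (C * (((d + d : ℕ) : ℝ) * (1 * Mb))) with hD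
  have hD0 : 0 ≤ D := by positivity
  have hZJb : ∀ u ∈ Set.Icc (s - 1) (s + 1), ∀ t ∈ Set.Icc (0:ℝ) 1, ∀ j,
      |((Z t)ᵀ.mulVec ((Jmat d).mulVec (η u t))) j| ≤ D := by
    intro u hu t ht j
    have h1 : ∀ k, |((Jmat d).mulVec (η u t)) k| ≤ ((d + d : ℕ) : ℝ) * (1 * Mb) := fun k =>
      JacobiAux.abs_mulVec_le (M := Jmat d) (CM := 1) (Cv := Mb)
        (fun i j => JacobiAux.Jmat_abs_le d i j) (hMb' u hu t ht) hMb0 k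
    exact JacobiAux.abs_mulVec_le (M := (Z t)ᵀ) (CM := C) (Cv := ((d + d : ℕ) : ℝ) * (1 * Mb))
      (fun i j => by rw [Matrix.transpose_apply]; exact hC t ht j i) h1 (by positivity) j
  -- the key identity, valid for every parameter u
  have claim : ∀ u, ((Jmat d).mulVec (η s 1)) ⬝ᵥ (η u 1)
      = ((Jmat d).mulVec (η s 0)) ⬝ᵥ (η u 0) + (u - s) * K u := by
    intro u
    -- bound for η s and η u on [0,1]
    obtain ⟨MM, hMM⟩ := ((isCompact_Icc (a := min s u) (b := max s u)).prod
      (isCompact_Icc (a := (0:ℝ)) (b := 1))).exists_bound_of_continuousOn hηcont.continuousOn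
    have hsmem' : s ∈ Set.Icc (min s u) (max s u) := ⟨min_le_left _ _, le_max_left _ _⟩
    have humem' : u ∈ Set.Icc (min s u) (max s u) := ⟨min_le_right _ _, le_max_right _ _⟩
    have hMM0 : 0 ≤ MM := (norm_nonneg _).trans (hMM (s, 0) ⟨hsmem', hmem0⟩)
    have hMMc : ∀ w ∈ Set.Icc (min s u) (max s u), ∀ t ∈ Set.Icc (0:ℝ) 1, ∀ i,
        |η w t i| ≤ MM := by
      intro w hw t ht i
      exact (norm_le_pi_norm (η w t) i).trans (hMM (w, t) ⟨hw, ht⟩)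
    set Bm : ℝ := (m : ℝ) * (C * (((d + d : ℕ) : ℝ) * (C * (((d + d : ℕ) : ℝ) * (1 * MM))))) with hBm
    have hBm0 : 0 ≤ Bm := by positivity
    set CB : ℝ := (|s| + |u|) * Bm with hCB
    have heqA : ∀ (t : ℝ) (v : Fin (d + d) → ℝ),
        (Z t * (Z t)ᵀ * Jmat d).mulVec v
          = (Z t).mulVec ((Z t)ᵀ.mulVec ((Jmat d).mulVec v)) := by
      intro t v
      rw [Matrix.mulVec_mulVec, Matrix.mulVec_mulVec]
    have hAbound : ∀ w ∈ Set.Icc (min s u) (max s u), ∀ t ∈ Set.Icc (0:ℝ) 1, ∀ i,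
        |((Z t * (Z t)ᵀ * Jmat d).mulVec (η w t)) i| ≤ Bm := by
      intro w hw t ht i
      rw [heqA]
      have h1 : ∀ k, |((Jmat d).mulVec (η w t)) k| ≤ ((d + d : ℕ) : ℝ) * (1 * MM) := fun k =>
        JacobiAux.abs_mulVec_le (M := Jmat d) (CM := 1) (Cv := MM)
          (fun i j => JacobiAux.Jmat_abs_le d i j) (hMMc w hw t ht) hMM0 k
      have h2 : ∀ k, |((Z t)ᵀ.mulVec ((Jmat d).mulVec (η w t))) k|
          ≤ ((d + d : ℕ) : ℝ) * (C * (((d + d : ℕ) : ℝ) * (1 * MM))) := fun k =>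
        JacobiAux.abs_mulVec_le (M := (Z t)ᵀ) (CM := C)
          (Cv := ((d + d : ℕ) : ℝ) * (1 * MM))
          (fun i j => by rw [Matrix.transpose_apply]; exact hC t ht j i) h1 (by positivity) k
      exact JacobiAux.abs_mulVec_le (M := Z t) (CM := C)
        (Cv := ((d + d : ℕ) : ℝ) * (C * (((d + d : ℕ) : ℝ) * (1 * MM))))
        (fun i j => hC t ht i j) h2 (by positivity) i
    have hAm : ∀ w (i : Fin (d + d)),
        Measurable fun t => ((Z t * (Z t)ᵀ * Jmat d).mulVec (η w t)) i := by
      intro w i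
      have hfe : (fun t => ((Z t * (Z t)ᵀ * Jmat d).mulVec (η w t)) i)
          = fun t => ((Z t).mulVec ((Z t)ᵀ.mulVec ((Jmat d).mulVec (η w t)))) i := by
        funext t; rw [heqA]
      rw [hfe]
      exact JacobiAux.measurable_mulVec_apply (M := Z) (fun i j => hZmeas i j) (hZJm w) i
    have hfSm : ∀ i : Fin (d + d), Measurable fun t =>
        (s • ((Z t * (Z t)ᵀ * Jmat d).mulVec (η s t))) i := by
      intro i
      simp only [Pi.smul_apply, smul_eq_mul]
      exact (hAm s i).const_mul s
    have hgUm : ∀ i : Fin (d + d), Measurable fun t =>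
        (u • ((Z t * (Z t)ᵀ * Jmat d).mulVec (η u t))) i := by
      intro i
      simp only [Pi.smul_apply, smul_eq_mul]
      exact (hAm u i).const_mul u
    have hfSb : ∀ t ∈ Set.Icc (0:ℝ) 1, ∀ i,
        |(s • ((Z t * (Z t)ᵀ * Jmat d).mulVec (η s t))) i| ≤ CB := by
      intro t ht i
      simp only [Pi.smul_apply, smul_eq_mul, abs_mul]
      calc |s| * |((Z t * (Z t)ᵀ * Jmat d).mulVec (η s t)) i|
          ≤ |s| * Bm := mul_le_mul_of_nonneg_left (hAbound s hsmem' t ht i) (abs_nonneg s)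
        _ ≤ CB := by rw [hCB]; nlinarith [abs_nonneg u, hBm0]
    have hgUb : ∀ t ∈ Set.Icc (0:ℝ) 1, ∀ i,
        |(u • ((Z t * (Z t)ᵀ * Jmat d).mulVec (η u t))) i| ≤ CB := by
      intro t ht i
      simp only [Pi.smul_apply, smul_eq_mul, abs_mul]
      calc |u| * |((Z t * (Z t)ᵀ * Jmat d).mulVec (η u t)) i|
          ≤ |u| * Bm := mul_le_mul_of_nonneg_left (hAbound u humem' t ht i) (abs_nonneg u)
        _ ≤ CB := by rw [hCB]; nlinarith [abs_nonneg s, hBm0]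
    have hEq : Set.EqOn
        (fun t => ((Jmat d).mulVec (s • ((Z t * (Z t)ᵀ * Jmat d).mulVec (η s t)))) ⬝ᵥ
            (η u 0 + ∫ τ in (0:ℝ)..t, u • ((Z τ * (Z τ)ᵀ * Jmat d).mulVec (η u τ)))
          + ((Jmat d).mulVec
              (η s 0 + ∫ τ in (0:ℝ)..t, s • ((Z τ * (Z τ)ᵀ * Jmat d).mulVec (η s τ)))) ⬝ᵥ
            (u • ((Z t * (Z t)ᵀ * Jmat d).mulVec (η u t))))
        (fun t => (u - s) * c u t) (Set.uIcc (0:ℝ) 1) := by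
      intro t ht
      rw [Set.uIcc_of_le zero_le_one] at ht
      simp only [hc]
      rw [← hηsol u t ht, ← hηsol s t ht]
      exact JacobiAux.pointwise_algebra (Z t) s u (η s t) (η u t)
    calc ((Jmat d).mulVec (η s 1)) ⬝ᵥ (η u 1)
        = ((Jmat d).mulVec (η s 0 + ∫ t in (0:ℝ)..1,
              s • ((Z t * (Z t)ᵀ * Jmat d).mulVec (η s t)))) ⬝ᵥ
          (η u 0 + ∫ t in (0:ℝ)..1, u • ((Z t * (Z t)ᵀ * Jmat d).mulVec (η u t))) := by
          rw [hηsol s 1 hmem1, hηsol u 1 hmem1]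
      _ = ((Jmat d).mulVec (η s 0)) ⬝ᵥ (η u 0) + ∫ t in (0:ℝ)..1,
            (((Jmat d).mulVec (s • ((Z t * (Z t)ᵀ * Jmat d).mulVec (η s t)))) ⬝ᵥ
              (η u 0 + ∫ τ in (0:ℝ)..t, u • ((Z τ * (Z τ)ᵀ * Jmat d).mulVec (η u τ)))
            + ((Jmat d).mulVec
                (η s 0 + ∫ τ in (0:ℝ)..t, s • ((Z τ * (Z τ)ᵀ * Jmat d).mulVec (η s τ)))) ⬝ᵥ
              (u • ((Z t * (Z t)ᵀ * Jmat d).mulVec (η u t)))) :=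
          JacobiAux.bilin_expand (by omega) (Jmat d) (η s 0) (η u 0)
            (fun t => s • ((Z t * (Z t)ᵀ * Jmat d).mulVec (η s t)))
            (fun t => u • ((Z t * (Z t)ᵀ * Jmat d).mulVec (η u t))) CB hfSm hgUm hfSb hgUb
      _ = ((Jmat d).mulVec (η s 0)) ⬝ᵥ (η u 0) + ∫ t in (0:ℝ)..1, (u - s) * c u t := by
          rw [intervalIntegral.integral_congr hEq]
      _ = ((Jmat d).mulVec (η s 0)) ⬝ᵥ (η u 0) + (u - s) * K u := by
          rw [intervalIntegral.integral_const_mul]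
          simp only [hK]
          rw [intervalIntegral.integral_of_le zero_le_one,
            MeasureTheory.integral_Icc_eq_integral_Ioc]
  -- derivative of the left-hand side of the claim
  have hD1 : HasDerivAt (fun u => ((Jmat d).mulVec (η s 1)) ⬝ᵥ η u 1)
      (((Jmat d).mulVec (η s 1)) ⬝ᵥ ηs s 1) s := by
    have hco : ∀ i, HasDerivAt (fun u => η u 1 i) (ηs s 1 i) s :=
      fun i => (hasDerivAt_pi.1 (hηderiv s 1)) i
    simp only [dotProduct]
    exact HasDerivAt.fun_sum fun i _ => (hco i).const_mul _
  -- the q-coordinates of ηs s 0 vanish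
  have hq' : ∀ i : Fin d, ηs s 0 (finSumFinEquiv (Sum.inr i)) = 0 := by
    intro i
    have h1 : HasDerivAt (fun u => η u 0 (finSumFinEquiv (Sum.inr i)))
        (ηs s 0 (finSumFinEquiv (Sum.inr i))) s := (hasDerivAt_pi.1 (hηderiv s 0)) _
    have h2 : (fun u => η u 0 (finSumFinEquiv (Sum.inr i))) = fun _ => (0:ℝ) :=
      funext fun u => hq0 u i
    rw [h2] at h1
    exact h1.unique (hasDerivAt_const s 0)
  have hzero : ((Jmat d).mulVec (η s 0)) ⬝ᵥ (ηs s 0) = 0 := by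
    simp only [dotProduct]
    rw [← Equiv.sum_comp finSumFinEquiv
      (fun k => ((Jmat d).mulVec (η s 0)) k * (ηs s 0) k), Fintype.sum_sum_type]
    rw [Finset.sum_eq_zero, Finset.sum_eq_zero, add_zero]
    · intro i _
      rw [hq' i, mul_zero]
    · intro i _
      rw [JacobiAux.Jmat_mulVec_inl, hq0 s i, neg_zero, zero_mul]
  have hD2 : HasDerivAt (fun u => ((Jmat d).mulVec (η s 0)) ⬝ᵥ η u 0) 0 s := by
    have hco : ∀ i, HasDerivAt (fun u => η u 0 i) (ηs s 0 i) s :=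
      fun i => (hasDerivAt_pi.1 (hηderiv s 0)) i
    have h3 : HasDerivAt (fun u => ((Jmat d).mulVec (η s 0)) ⬝ᵥ η u 0)
        (((Jmat d).mulVec (η s 0)) ⬝ᵥ ηs s 0) s := by
      simp only [dotProduct]
      exact HasDerivAt.fun_sum fun i _ => (hco i).const_mul _
    rwa [hzero] at h3
  -- continuity of K at s
  have hKcont : ContinuousAt K s := by
    simp only [hK]
    apply MeasureTheory.continuousAt_of_dominated (bound := fun _ => (m:ℝ) * (D * D))
    · exact Filter.Eventually.of_forall fun u => (hcm u).aestronglyMeasurable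
    · have hnhds : Set.Icc (s - 1) (s + 1) ∈ 𝓝 s :=
        Icc_mem_nhds (by linarith) (by linarith)
      filter_upwards [hnhds] with u hu
      filter_upwards [ae_restrict_mem measurableSet_Icc] with t ht
      rw [Real.norm_eq_abs, hc]
      exact JacobiAux.abs_dotProduct_le (hZJb s hsmem t ht) (hZJb u hu t ht) hD0
    · exact MeasureTheory.integrable_const _
    · refine Filter.Eventually.of_forall fun t => ?_
      have h1 : ∀ k : Fin (d + d), Continuous fun u => ((Jmat d).mulVec (η u t)) k := by
        intro k
        simp only [Matrix.mulVec, dotProduct]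
        exact continuous_finset_sum _ fun l _ =>
          continuous_const.mul ((continuous_apply l).comp (hηtc t))
      have h2 : ∀ j : Fin m,
          Continuous fun u => ((Z t)ᵀ.mulVec ((Jmat d).mulVec (η u t))) j := by
        intro j
        simp only [Matrix.mulVec, dotProduct]
        exact continuous_finset_sum _ fun k _ => continuous_const.mul (h1 k)
      have hcu : Continuous fun u => c u t := by
        simp only [hc, dotProduct]
        exact continuous_finset_sum _ fun j _ => continuous_const.mul (h2 j)
      exact hcu.continuousAt
  -- derivative of (u - s) * K u at s
  have hslope : HasDerivAt (fun u => (u - s) * K u) (K s) s := by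
    rw [hasDerivAt_iff_tendsto_slope]
    apply Filter.Tendsto.congr' ?_ (hKcont.tendsto.mono_left nhdsWithin_le_nhds)
    filter_upwards [self_mem_nhdsWithin] with u hu
    have hus : u - s ≠ 0 := sub_ne_zero.2 hu
    rw [slope_def_field]
    field_simp
    ring
  have hD3 : HasDerivAt
      (fun u => ((Jmat d).mulVec (η s 0)) ⬝ᵥ η u 0 + (u - s) * K u) (0 + K s) s :=
    hD2.add hslope
  have hfun : (fun u => ((Jmat d).mulVec (η s 1)) ⬝ᵥ η u 1)
      = fun u => ((Jmat d).mulVec (η s 0)) ⬝ᵥ η u 0 + (u - s) * K u := funext claim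
  rw [hfun] at hD1
  have hmain := hD1.unique hD3
  rw [hmain, zero_add, hK]

end
end
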